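/- arXiv:math/0607293 — 2 statements merged into one kernel-verified Lean document; each statement's English description precedes it below -/
import Mathlib

section
/- (Exit-time tail bound.) In the anisotropic gradient-type environment, assume in addition: (i) the family (P_{x,ω})_{x∈ℝ^d} satisfies the Markov property; (ii) for each ω there are jointly measurable transition densities p_ω(t,x,y) with P_{x,ω}[X_t ∈ A] = ∫_A p_ω(t,x,y) dy, satisfying p_ω(t,x,y) ≤ c̃ t^{−d/2} exp(−c|x−y|²/t) for all 0 < t ≤ 1, x, y, ω, for constants c̃, c > 0; (iii) with m_ω(dx) = e^{2ψ(x,ω)} dx and killed semigroup (P^t_{ω,U} f)(x) = E_{x,ω}[f(X_t) 1_{T_U > t}], there is c₃ > 0 such that sup over ω and nonempty open U of the L²(m_ω) operator norm of P^t_{ω,U} is at most e^{−c₃ t} for every t > 0. Then for every δ ∈ (0,1) and b > 0 there is a constant c₄ = c₄(δ,b,η) > 0 such that for every unit vector ℓ' with ℓ'·ℓ > √(1−δ²) and every L > 0: sup_{ω∈Ω} P_{0,ω}[T_{V_{ℓ',δ}} ≥ (3λ/c₃)L] ≤ c₄ e^{−(λ/2)L}. -/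
open MeasureTheory ProbabilityTheory Filter Set
open scoped NNReal RealInnerProductSpace ENNReal

noncomputable section

abbrev EucSp (d : ℕ) : Type := EuclideanSpace ℝ (Fin d)

abbrev PathSp (d : ℕ) : Type := C(ℝ≥0, EucSp d)

instance pathMS (d : ℕ) : MeasurableSpace (PathSp d) := borel _
instance pathBorel (d : ℕ) : BorelSpace (PathSp d) := ⟨rfl⟩

/-- `i`-th canonical basis vector of `ℝ^d`. -/
def ebasis (d : ℕ) (i : Fin d) : EucSp d := EuclideanSpace.single i 1

/-- The differential operator `L f = (1/2) ∑ aᵢⱼ ∂²ᵢⱼ f + ∑ bᵢ ∂ᵢ f`. -/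
def gen {d : ℕ} (a : EucSp d → Fin d → Fin d → ℝ) (bvec : EucSp d → EucSp d)
    (f : EucSp d → ℝ) (x : EucSp d) : ℝ :=
  (1 / 2) * ∑ i, ∑ j, a x i j *
      fderiv ℝ (fun y => fderiv ℝ f y (ebasis d j)) x (ebasis d i)
    + ∑ i, bvec x i * fderiv ℝ f x (ebasis d i)

/-- canonical filtration on path space: σ-algebra generated by evaluations up to time `s`. -/
def pathσ (d : ℕ) (s : ℝ≥0) : MeasurableSpace (PathSp d) :=
  ⨆ r ∈ Set.Iic s, MeasurableSpace.comap (fun w : PathSp d => w r) inferInstance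

/-- bounded functions of class C². -/
def IsBddC2 {d : ℕ} (f : EucSp d → ℝ) : Prop :=
  ContDiff ℝ 2 f ∧ ∃ M, ∀ x, |f x| ≤ M

/-- The process `f(X_t) - ∫_0^t L f(X_s) ds` associated to the martingale problem. -/
def mpFun {d : ℕ} (a : EucSp d → Fin d → Fin d → ℝ) (bvec : EucSp d → EucSp d)
    (f : EucSp d → ℝ) (t : ℝ≥0) (w : PathSp d) : ℝ :=
  f (w t) - ∫ s in (0:ℝ)..(t:ℝ), gen a bvec f (w s.toNNReal)

/-- `Q` is a solution of the martingale problem for the operator attached to `a`, `bvec`,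
started at `x`. -/
def IsMPSol {d : ℕ} (a : EucSp d → Fin d → Fin d → ℝ) (bvec : EucSp d → EucSp d)
    (x : EucSp d) (Q : Measure (PathSp d)) : Prop :=
  IsProbabilityMeasure Q ∧ (∀ᵐ w ∂Q, w 0 = x) ∧
  ∀ f : EucSp d → ℝ, IsBddC2 f →
    (∀ t : ℝ≥0, Integrable (mpFun a bvec f t) Q) ∧
    ∀ s t : ℝ≥0, s ≤ t → ∀ A : Set (PathSp d), MeasurableSet[pathσ d s] A →
      ∫ w in A, mpFun a bvec f t w ∂Q = ∫ w in A, mpFun a bvec f s w ∂Q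

/-- exit time from `U` (equal to `0` by convention if the path never leaves `U`). -/
def exitTime {d : ℕ} (U : Set (EucSp d)) (w : PathSp d) : ℝ≥0 :=
  sInf {t : ℝ≥0 | w t ∉ U}

/-- the slab `U_{ℓ,b,L}`. -/
def slab {d : ℕ} (ℓ : EucSp d) (b L : ℝ) : Set (EucSp d) :=
  {x | -(b * L) < ⟪x, ℓ⟫ ∧ ⟪x, ℓ⟫ < L}

/-- the event that the diffusion leaves the slab `U_{ℓ,b,L}` on the left. -/
def badSlabExit {d : ℕ} (ℓ : EucSp d) (b L : ℝ) : Set (PathSp d) :=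
  {w | (∃ t : ℝ≥0, w t ∉ slab ℓ b L) ∧ ⟪w (exitTime (slab ℓ b L) w), ℓ⟫ < 0}

/-- Condition (T) relative to the direction `ℓ`, for the (annealed) law `P0`. -/
def CondT {d : ℕ} (P0 : Measure (PathSp d)) (ℓ : EucSp d) : Prop :=
  ∃ ε > (0:ℝ), ∀ ℓ' : EucSp d, ‖ℓ'‖ = 1 → ‖ℓ' - ℓ‖ < ε → ∀ b > (0:ℝ),
    limsup (fun L : ℝ => (L⁻¹ : EReal) * ENNReal.log (P0 (badSlabExit ℓ' b L))) atTop < 0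

/-- identity diffusion matrix. -/
def idMat (d : ℕ) : EucSp d → Fin d → Fin d → ℝ := fun _ i j => if i = j then 1 else 0

/-- the drift `b(x,ω) = ∇ψ(x,ω) = ∇φ(x,ω) + λℓ`. -/
def gradDrift {d : ℕ} {Ω : Type*} (T : EucSp d → Ω → Ω) (φ0 : Ω → ℝ)
    (lam : ℝ) (ℓ : EucSp d) (ω : Ω) (x : EucSp d) : EucSp d :=
  gradient (fun y => φ0 (T y ω)) x + lam • ℓ

/-- Assumptions on the anisotropic gradient-type random environment: `φ` is a bounded
stationary potential with bounded and Lipschitz continuous gradient, and the quenched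
laws `P x ω` are the unique solutions of the martingale problems attached to `a = Id`,
`b(·,ω) = ∇φ(·,ω) + λℓ`. -/
def GradEnv (d : ℕ) (η β' K : ℝ) {Ω : Type*} [MeasurableSpace Ω] (Pr : Measure Ω)
    (T : EucSp d → Ω → Ω) (φ0 : Ω → ℝ) (lam : ℝ) (ℓ : EucSp d)
    (P : EucSp d → Ω → Measure (PathSp d)) : Prop :=
  IsProbabilityMeasure Pr ∧
  T 0 = id ∧
  (∀ x y, T (x + y) = T x ∘ T y) ∧
  Measurable (fun p : EucSp d × Ω => T p.1 p.2) ∧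
  (∀ x, MeasurePreserving (T x) Pr Pr) ∧
  Measurable φ0 ∧
  (∀ ω, |φ0 ω| ≤ η) ∧
  (∀ ω, Differentiable ℝ fun x => φ0 (T x ω)) ∧
  (∀ ω (x : EucSp d), ‖gradient (fun y => φ0 (T y ω)) x‖ ≤ β') ∧
  (∀ ω (y z : EucSp d),
      ‖gradient (fun y' => φ0 (T y' ω)) y - gradient (fun y' => φ0 (T y' ω)) z‖ ≤ K * ‖y - z‖) ∧
  (∀ x : EucSp d, Measurable fun ω => P x ω) ∧
  (∀ x ω, IsMPSol (idMat d) (gradDrift T φ0 lam ℓ ω) x (P x ω)) ∧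
  (∀ x ω Q, IsMPSol (idMat d) (gradDrift T φ0 lam ℓ ω) x Q → Q = P x ω)

/-- the cylinder `V_{ℓ',δ}` (with parameters `b`, `L`), radius `ρ`. -/
def cyl {d : ℕ} (ℓ' : EucSp d) (b L ρ : ℝ) : Set (EucSp d) :=
  {x | -(b * L) < ⟪x, ℓ'⟫ ∧ ⟪x, ℓ'⟫ < L ∧ ‖x - ⟪x, ℓ'⟫ • ℓ'‖ < ρ}

/-- the potential `ψ(x,ω) = φ(x,ω) + λ ℓ·x`. -/
def psiF {d : ℕ} {Ω : Type*} (T : EucSp d → Ω → Ω) (φ0 : Ω → ℝ)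
    (lam : ℝ) (ℓ : EucSp d) (ω : Ω) (x : EucSp d) : ℝ :=
  φ0 (T x ω) + lam * ⟪ℓ, x⟫

/-- time shift on path space. -/
def shift {d : ℕ} (s : ℝ≥0) (w : PathSp d) : PathSp d :=
  ⟨fun t => w (s + t), w.continuous.comp (by fun_prop)⟩

/-- the killed semigroup `(P^t_{ω,U} f)(x) = E_{x,ω}[f(X_t), T_U > t]`. -/
def killedSg {d : ℕ} {Ω : Type*} [MeasurableSpace Ω]
    (P : EucSp d → Ω → Measure (PathSp d)) (ω : Ω) (U : Set (EucSp d)) (t : ℝ≥0)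
    (f : EucSp d → ℝ) (x : EucSp d) : ℝ :=
  ∫ w, Set.indicator {w' : PathSp d | ∀ s ≤ t, w' s ∈ U} (fun w' => f (w' t)) w ∂(P x ω)

/-- the full semigroup `(P^t_ω f)(x) = E_{x,ω}[f(X_t)]`. -/
def fullSg {d : ℕ} {Ω : Type*} [MeasurableSpace Ω]
    (P : EucSp d → Ω → Measure (PathSp d)) (ω : Ω) (t : ℝ≥0)
    (f : EucSp d → ℝ) (x : EucSp d) : ℝ :=
  ∫ w, f (w t) ∂(P x ω)

-- ==================== auxiliary lemmas ====================
section aux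
variable {d : ℕ}

/-- addition of a constant on path space. -/
def pathAdd (y : EucSp d) (w : PathSp d) : PathSp d := w + ContinuousMap.const ℝ≥0 y

lemma pathAdd_apply (y : EucSp d) (w : PathSp d) (t : ℝ≥0) : pathAdd y w t = w t + y := rfl

lemma continuous_pathAdd (y : EucSp d) : Continuous (pathAdd y : PathSp d → PathSp d) :=
  continuous_id.add continuous_const

lemma fderiv_translate {F : Type*} [NormedAddCommGroup F] [NormedSpace ℝ F]
    (h : EucSp d → F) (y x : EucSp d) (hd : DifferentiableAt ℝ h (x + y)) :
    fderiv ℝ (fun z => h (z + y)) x = fderiv ℝ h (x + y) := by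
  have h' := (hd.hasFDerivAt.comp x ((hasFDerivAt_id x).add_const y)).fderiv
  simp at h'
  exact h'

lemma gradient_translate (h : EucSp d → ℝ) (y x : EucSp d)
    (hd : DifferentiableAt ℝ h (x + y)) :
    gradient (fun z => h (z + y)) x = gradient h (x + y) := by
  unfold gradient
  rw [fderiv_translate h y x hd]

lemma gen_translate (b b' : EucSp d → EucSp d) (f : EucSp d → ℝ) (hf : ContDiff ℝ 2 f)
    (y : EucSp d) (hb : ∀ x, b' x = b (x + y)) (x : EucSp d) :
    gen (idMat d) b' (fun z => f (z + y)) x = gen (idMat d) b f (x + y) := by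
  have hfd : Differentiable ℝ f := hf.differentiable (by norm_num)
  have hf1 : ContDiff ℝ 1 (fderiv ℝ f) := hf.fderiv_right (by norm_num)
  have hfd1 : ∀ j, Differentiable ℝ (fun z => fderiv ℝ f z (ebasis d j)) := fun j =>
    (hf1.differentiable (by norm_num)).clm_apply (differentiable_const _)
  have hfe : ∀ j, (fun z => fderiv ℝ (fun u => f (u + y)) z (ebasis d j))
      = fun z => fderiv ℝ f (z + y) (ebasis d j) := by
    intro j; funext z; rw [fderiv_translate f y z (hfd _)]
  unfold gen
  congr 1
  · congr 1
    apply Finset.sum_congr rfl; intro i _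
    apply Finset.sum_congr rfl; intro j _
    have e2 : fderiv ℝ (fun z => fderiv ℝ (fun u => f (u + y)) z (ebasis d j)) x
        = fderiv ℝ (fun z => fderiv ℝ f z (ebasis d j)) (x + y) := by
      rw [hfe j]
      exact fderiv_translate (fun u => fderiv ℝ f u (ebasis d j)) y x (hfd1 j (x + y))
    rw [e2]
    rfl
  · apply Finset.sum_congr rfl; intro i _
    rw [hb, fderiv_translate f y x (hfd _)]

lemma gen_continuous (b : EucSp d → EucSp d) (f : EucSp d → ℝ) (hf : ContDiff ℝ 2 f)
    (hb : Continuous b) : Continuous (gen (idMat d) b f) := by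
  have hf1 : ContDiff ℝ 1 (fderiv ℝ f) := hf.fderiv_right (by norm_num)
  have hc1 : Continuous (fderiv ℝ f) := hf1.continuous
  have hc2 : Continuous (fderiv ℝ (fderiv ℝ f)) :=
    (hf1.fderiv_right (m := 0) (by norm_num)).continuous
  unfold gen
  apply Continuous.add
  · apply continuous_const.mul
    apply continuous_finset_sum; intro i _
    apply continuous_finset_sum; intro j _
    apply Continuous.mul continuous_const
    have hfun : (fun z => fderiv ℝ f z (ebasis d j))
        = (ContinuousLinearMap.apply ℝ ℝ (ebasis d j)) ∘ (fderiv ℝ f) := rfl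
    have : ∀ x, fderiv ℝ (fun z => fderiv ℝ f z (ebasis d j)) x
        = (ContinuousLinearMap.apply ℝ ℝ (ebasis d j)).comp (fderiv ℝ (fderiv ℝ f) x) := by
      intro x
      rw [hfun, fderiv_comp x (ContinuousLinearMap.apply ℝ ℝ (ebasis d j)).differentiableAt
        ((hf1.differentiable (by norm_num)) x), ContinuousLinearMap.fderiv]
    simp only [this]
    exact ((hc2.clm_apply continuous_const).clm_apply continuous_const)
  · apply continuous_finset_sum; intro i _
    exact ((EuclideanSpace.proj i).continuous.comp hb).mul (hc1.clm_apply continuous_const)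

lemma pathσ_le (s : ℝ≥0) : pathσ d s ≤ pathMS d := by
  apply iSup₂_le
  intro r _
  rw [← measurable_iff_comap_le]
  exact (ContinuousEvalConst.continuous_eval_const r).measurable

lemma mpFun_stronglyMeasurable (b : EucSp d → EucSp d) (f : EucSp d → ℝ)
    (hf : ContDiff ℝ 2 f) (hb : Continuous b) (t : ℝ≥0) :
    StronglyMeasurable (mpFun (idMat d) b f t) := by
  have hg : Continuous (gen (idMat d) b f) := gen_continuous b f hf hb
  have h1 : Continuous fun w : PathSp d => f (w t) :=
    hf.continuous.comp (ContinuousEvalConst.continuous_eval_const t)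
  have hΦ : Continuous fun q : PathSp d × ℝ => gen (idMat d) b f (q.1 q.2.toNNReal) :=
    hg.comp (ContinuousEval.continuous_eval.comp
      (continuous_fst.prodMk (continuous_real_toNNReal.comp continuous_snd)))
  have h2 : StronglyMeasurable fun w : PathSp d =>
      ∫ s in Ioc (0:ℝ) (t:ℝ), gen (idMat d) b f (w s.toNNReal) :=
    StronglyMeasurable.integral_prod_right
      (f := fun (w : PathSp d) (s : ℝ) => gen (idMat d) b f (w s.toNNReal))
      (ν := volume.restrict (Ioc (0:ℝ) (t:ℝ))) hΦ.stronglyMeasurable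
  have : mpFun (idMat d) b f t = fun w =>
      f (w t) - ∫ s in Ioc (0:ℝ) (t:ℝ), gen (idMat d) b f (w s.toNNReal) := by
    funext w
    rw [mpFun, intervalIntegral.integral_of_le t.coe_nonneg]
  rw [this]
  exact h1.stronglyMeasurable.sub h2

lemma pathAdd_pathσ (y : EucSp d) (s : ℝ≥0) {A : Set (PathSp d)}
    (hA : MeasurableSet[pathσ d s] A) :
    MeasurableSet[pathσ d s] ((pathAdd y : PathSp d → PathSp d) ⁻¹' A) := by
  have hmeas : Measurable[pathσ d s, pathσ d s] (pathAdd y : PathSp d → PathSp d) := by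
    rw [measurable_iff_comap_le]
    unfold pathσ
    simp only [MeasurableSpace.comap_iSup]
    apply iSup₂_le
    intro r hr
    have h1 : MeasurableSpace.comap (pathAdd y : PathSp d → PathSp d)
        (MeasurableSpace.comap (fun w : PathSp d => w r) inferInstance)
        = MeasurableSpace.comap (fun w : PathSp d => w r + y) inferInstance := by
      rw [MeasurableSpace.comap_comp]; rfl
    rw [h1]
    have h2 : (fun w : PathSp d => w r + y)
        = (fun z : EucSp d => z + y) ∘ (fun w : PathSp d => w r) := rfl
    rw [h2, ← MeasurableSpace.comap_comp]
    refine le_trans (MeasurableSpace.comap_mono ?_) (le_iSup₂ (f := fun r _ =>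
      MeasurableSpace.comap (fun w : PathSp d => w r) inferInstance) r hr)
    rw [← measurable_iff_comap_le]
    exact measurable_add_const y
  exact hmeas hA

lemma isOpen_stay (U : Set (EucSp d)) (hU : IsOpen U) (t₁ : ℝ≥0) :
    IsOpen {w : PathSp d | ∀ s ≤ t₁, w s ∈ U} := by
  have : {w : PathSp d | ∀ s ≤ t₁, w s ∈ U}
      = {w : PathSp d | Set.MapsTo w (Set.Icc 0 t₁) U} := by
    ext w; simp [Set.MapsTo, Set.mem_Icc]
  rw [this]
  exact ContinuousMap.isOpen_setOf_mapsTo isCompact_Icc hU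

lemma continuous_shift (s : ℝ≥0) :
    Continuous (fun w : PathSp d => (⟨fun t => w (s + t),
      w.continuous.comp (by fun_prop)⟩ : PathSp d)) := by
  have : (fun w : PathSp d => (⟨fun t => w (s + t),
        w.continuous.comp (by fun_prop)⟩ : PathSp d))
      = fun w : PathSp d => w.comp ⟨fun t => s + t, by fun_prop⟩ := by
    funext w; exact ContinuousMap.ext fun t => rfl
  rw [this]
  exact ContinuousMap.continuous_precomp _


lemma mpFun_translate (b b' : EucSp d → EucSp d) (f : EucSp d → ℝ) (hf : ContDiff ℝ 2 f)
    (y : EucSp d) (hb : ∀ x, b' x = b (x + y)) (t : ℝ≥0) (w : PathSp d) :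
    mpFun (idMat d) b' (fun z => f (z + y)) t w = mpFun (idMat d) b f t (pathAdd y w) := by
  unfold mpFun
  have h1 : (fun z => f (z + y)) (w t) = f (pathAdd y w t) := rfl
  rw [h1]
  congr 1
  apply intervalIntegral.integral_congr
  intro s _
  exact gen_translate b b' f hf y hb (w s.toNNReal)

lemma quenchedShift {Ω : Type} [MeasurableSpace Ω] (T : EucSp d → Ω → Ω) (φ0 : Ω → ℝ)
    (lam : ℝ) (ℓ : EucSp d) (K : ℝ) (P : EucSp d → Ω → Measure (PathSp d))
    (hTadd : ∀ x y, T (x + y) = T x ∘ T y)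
    (hφd : ∀ ω, Differentiable ℝ fun x => φ0 (T x ω))
    (hgl : ∀ ω (y z : EucSp d), ‖gradient (fun y' => φ0 (T y' ω)) y
        - gradient (fun y' => φ0 (T y' ω)) z‖ ≤ K * ‖y - z‖)
    (hMP : ∀ x ω, IsMPSol (idMat d) (gradDrift T φ0 lam ℓ ω) x (P x ω))
    (huniq : ∀ x ω Q, IsMPSol (idMat d) (gradDrift T φ0 lam ℓ ω) x Q → Q = P x ω)
    (ω : Ω) (y : EucSp d) :
    P y ω = (P 0 (T y ω)).map (pathAdd y) := by
  set ω' := T y ω with hω'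
  set bω := gradDrift T φ0 lam ℓ ω with hbω
  set bω' := gradDrift T φ0 lam ℓ ω' with hbω'
  have hbrel : ∀ x, bω' x = bω (x + y) := by
    intro x
    rw [hbω', hbω]
    unfold gradDrift
    congr 1
    have h1 : (fun z => φ0 (T z ω')) = fun z => φ0 (T (z + y) ω) := by
      funext z; rw [hTadd z y]; rfl
    rw [h1]
    exact gradient_translate (fun z => φ0 (T z ω)) y x (hφd ω (x + y))
  have hbcont : Continuous bω := by
    have hlip : LipschitzWith (Real.toNNReal K) (fun x => gradient (fun z => φ0 (T z ω)) x) := by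
      apply LipschitzWith.of_dist_le_mul
      intro a c
      rw [dist_eq_norm, dist_eq_norm]
      calc ‖gradient (fun z => φ0 (T z ω)) a - gradient (fun z => φ0 (T z ω)) c‖
          ≤ K * ‖a - c‖ := hgl ω a c
        _ ≤ (Real.toNNReal K) * ‖a - c‖ := by
            gcongr
            exact Real.le_coe_toNNReal K
    exact hlip.continuous.add continuous_const
  have hτc : Continuous (pathAdd y : PathSp d → PathSp d) := continuous_pathAdd y
  have hτm : Measurable (pathAdd y : PathSp d → PathSp d) := hτc.measurable
  obtain ⟨hprob', hae', hmart'⟩ := hMP 0 ω'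
  refine (huniq y ω _ ⟨?_, ?_, ?_⟩).symm
  · exact Measure.isProbabilityMeasure_map hτm.aemeasurable
  · rw [MeasureTheory.ae_map_iff hτm.aemeasurable]
    · filter_upwards [hae'] with w hw
      show pathAdd y w 0 = y
      rw [pathAdd_apply, hw, zero_add]
    · exact (ContinuousEvalConst.continuous_eval_const (0:ℝ≥0)).measurable
        (measurableSet_singleton y)
  · intro f hfB
    have hf2 := hfB.1
    have hf'B : IsBddC2 (fun z => f (z + y)) :=
      ⟨hf2.comp (contDiff_id.add contDiff_const), hfB.2.imp fun M hM x => hM (x + y)⟩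
    have hkey : ∀ t : ℝ≥0, (fun w => mpFun (idMat d) bω f t (pathAdd y w))
        = mpFun (idMat d) bω' (fun z => f (z + y)) t := by
      intro t; funext w; rw [← mpFun_translate bω bω' f hf2 y hbrel t w]
    have hsm : ∀ t : ℝ≥0, StronglyMeasurable (mpFun (idMat d) bω f t) := fun t =>
      mpFun_stronglyMeasurable bω f hf2 hbcont t
    constructor
    · intro t
      rw [integrable_map_measure (hsm t).aestronglyMeasurable hτm.aemeasurable]
      have h2 : (mpFun (idMat d) bω f t) ∘ (pathAdd y)
          = mpFun (idMat d) bω' (fun z => f (z + y)) t := hkey t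
      rw [h2]
      exact (hmart' _ hf'B).1 t
    · intro s t hst A hA
      have hAb : MeasurableSet A := pathσ_le s A hA
      have hpre : MeasurableSet[pathσ d s] ((pathAdd y : PathSp d → PathSp d) ⁻¹' A) :=
        pathAdd_pathσ y s hA
      rw [setIntegral_map hAb (hsm t).aestronglyMeasurable hτm.aemeasurable,
        setIntegral_map hAb (hsm s).aestronglyMeasurable hτm.aemeasurable]
      have h3 : ∀ u : ℝ≥0, ∫ w in (pathAdd y : PathSp d → PathSp d) ⁻¹' A,
          mpFun (idMat d) bω f u (pathAdd y w) ∂(P 0 ω')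
          = ∫ w in (pathAdd y : PathSp d → PathSp d) ⁻¹' A,
          mpFun (idMat d) bω' (fun z => f (z + y)) u w ∂(P 0 ω') := by
        intro u
        apply setIntegral_congr_fun (pathσ_le s _ hpre)
        intro w _
        exact congrFun (hkey u) w
      rw [h3 t, h3 s]
      exact (hmart' _ hf'B).2 s t hst _ hpre

lemma integral_quenched_measurable {Ω : Type} [MeasurableSpace Ω]
    (T : EucSp d → Ω → Ω) (P : EucSp d → Ω → Measure (PathSp d)) (ω : Ω)
    (F : PathSp d → ℝ) (hF : Measurable F)
    (hshift : ∀ y, P y ω = (P 0 (T y ω)).map (pathAdd y))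
    (hPm : Measurable fun ω' => P 0 ω')
    (hTm : Measurable fun y : EucSp d => T y ω)
    (hprob : ∀ y : EucSp d, IsProbabilityMeasure (P 0 (T y ω))) :
    Measurable (fun y => ∫ w, F w ∂(P y ω)) := by
  have h1 : (fun y => ∫ w, F w ∂(P y ω))
      = fun y => ∫ w, F (pathAdd y w) ∂(P 0 (T y ω)) := by
    funext y
    rw [hshift y, integral_map (continuous_pathAdd y).measurable.aemeasurable
      hF.aestronglyMeasurable]
  rw [h1]
  set κ : ProbabilityTheory.Kernel (EucSp d) (PathSp d) :=
    ⟨fun y => P 0 (T y ω), hPm.comp hTm⟩ with hκ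
  haveI : ProbabilityTheory.IsMarkovKernel κ := ⟨fun y => hprob y⟩
  have hH : StronglyMeasurable fun q : EucSp d × PathSp d => F (pathAdd q.1 q.2) := by
    have hc : Continuous fun q : EucSp d × PathSp d => pathAdd q.1 q.2 := by
      have h2 : (fun q : EucSp d × PathSp d => pathAdd q.1 q.2)
          = fun q => q.2 + ContinuousMap.const ℝ≥0 q.1 := rfl
      rw [h2]
      exact continuous_snd.add ((ContinuousMap.continuous_const').comp continuous_fst)
    exact (hF.comp hc.measurable).stronglyMeasurable
  exact (hH.integral_kernel_prod_right' (κ := κ)).measurable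


lemma continuous_shift' (s : ℝ≥0) : Continuous (shift (d := d) s) := by
  have h : shift (d := d) s = fun w => w.comp ⟨fun t => s + t, by fun_prop⟩ := by
    funext w; exact ContinuousMap.ext fun t => rfl
  rw [h]
  exact ContinuousMap.continuous_precomp _

lemma gauss_integrable (cg : ℝ) (hcg : 0 < cg) :
    Integrable (fun v : EucSp d => Real.exp (-cg * ‖v‖ ^ 2)) := by
  have h := GaussianFourier.integrable_cexp_neg_mul_sq_norm_add
    (V := EucSp d) (b := (cg : ℂ)) (by simpa using hcg) 0 (0 : EucSp d)
  have h2 := h.norm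
  refine h2.congr ?_
  filter_upwards with v
  simp only [Complex.norm_exp]
  norm_num
  left
  norm_cast

set_option maxHeartbeats 1000000 in
lemma cyl_subset (ℓ ℓ' : EucSp d) (hℓ : ‖ℓ‖ = 1) (hℓ' : ‖ℓ'‖ = 1) (δ b L : ℝ)
    (hδ0 : 0 < δ) (hδ1 : δ < 1) (hb : 0 < b) (hL : 0 < L)
    (hip : Real.sqrt (1 - δ ^ 2) < ⟪ℓ', ℓ⟫) :
    ∀ x ∈ cyl ℓ' b L (L / Real.sqrt δ),
      ⟪ℓ, x⟫ ≤ 2 * L ∧ ‖x‖ ≤ (1 + b + 1 / Real.sqrt δ) * L := by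
  intro x hx
  obtain ⟨h1, h2, h3⟩ := hx
  set s : ℝ := ⟪x, ℓ'⟫ with hs
  set z : EucSp d := x - s • ℓ' with hz
  set c : ℝ := ⟪ℓ', ℓ⟫ with hc
  have hsδ : 0 < Real.sqrt δ := Real.sqrt_pos.2 hδ0
  have hδs : Real.sqrt δ * Real.sqrt δ = δ := Real.mul_self_sqrt hδ0.le
  have hsd1 : Real.sqrt δ ≤ 1 := by
    rw [show (1:ℝ) = Real.sqrt 1 by simp]
    exact Real.sqrt_le_sqrt hδ1.le
  have hc0 : 0 < c := lt_of_le_of_lt (Real.sqrt_nonneg _) hip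
  have hc1 : c ≤ 1 := by
    calc c ≤ ‖ℓ'‖ * ‖ℓ‖ := real_inner_le_norm ℓ' ℓ
    _ = 1 := by rw [hℓ, hℓ']; ring
  have hℓ'2 : ⟪ℓ', ℓ'⟫ = 1 := by
    rw [real_inner_self_eq_norm_mul_norm, hℓ']; ring
  have hzℓ' : ⟪z, ℓ'⟫ = 0 := by
    rw [hz, inner_sub_left, real_inner_smul_left, hℓ'2]; simp [hs]
  have hdecomp : x = s • ℓ' + z := by rw [hz]; abel
  have hinner0 : ⟪ℓ, x⟫ = s * c + ⟪z, ℓ⟫ := by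
    rw [real_inner_comm]
    conv_lhs => rw [hdecomp]
    rw [inner_add_left, real_inner_smul_left, ← hc]
  have hzl : ⟪z, ℓ⟫ = ⟪z, ℓ - c • ℓ'⟫ := by
    rw [inner_sub_right, real_inner_smul_right, hzℓ']; ring
  have hll' : ⟪ℓ, ℓ'⟫ = c := by rw [hc]; exact real_inner_comm ℓ' ℓ
  have hnormsq : ‖ℓ - c • ℓ'‖ ^ 2 = 1 - c ^ 2 := by
    rw [norm_sub_sq_real, real_inner_smul_right, hll', norm_smul, hℓ, hℓ']
    simp [abs_of_pos hc0]
    ring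
  have hcsq : 1 - δ ^ 2 ≤ c ^ 2 := by
    nlinarith [Real.sq_sqrt (show (0:ℝ) ≤ 1 - δ ^ 2 by nlinarith), Real.sqrt_nonneg (1 - δ ^ 2)]
  have hnorm_le : ‖ℓ - c • ℓ'‖ ≤ δ := by
    nlinarith [norm_nonneg (ℓ - c • ℓ'), sq_nonneg (‖ℓ - c • ℓ'‖ - δ)]
  have hzn : ‖z‖ ≤ L / Real.sqrt δ := le_of_lt h3
  have hzbound : ⟪z, ℓ⟫ ≤ Real.sqrt δ * L := by
    rw [hzl]
    calc ⟪z, ℓ - c • ℓ'⟫ ≤ ‖z‖ * ‖ℓ - c • ℓ'‖ := real_inner_le_norm _ _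
    _ ≤ (L / Real.sqrt δ) * δ := by
        apply mul_le_mul hzn hnorm_le (norm_nonneg _)
        positivity
    _ = Real.sqrt δ * L := by
        field_simp
        nlinarith
  constructor
  · have hsc : s * c ≤ L := by
      rcases le_or_gt 0 s with hs0 | hs0
      · nlinarith
      · nlinarith
    rw [hinner0]
    nlinarith
  · have habs : |s| ≤ (1 + b) * L := by
      rw [abs_le]
      constructor <;> nlinarith
    calc ‖x‖ = ‖s • ℓ' + z‖ := by rw [← hdecomp]
    _ ≤ ‖s • ℓ'‖ + ‖z‖ := norm_add_le _ _
    _ = |s| + ‖z‖ := by rw [norm_smul, hℓ', Real.norm_eq_abs]; ring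
    _ ≤ (1 + b) * L + L / Real.sqrt δ := add_le_add habs hzn
    _ = (1 + b + 1 / Real.sqrt δ) * L := by field_simp

end aux

set_option maxHeartbeats 2000000 in
theorem exit_time_tail_gradient_type (d : ℕ) (hd : 1 ≤ d) (η β' K : ℝ)
    (hη : 0 < η) (hβ' : 0 < β') (hK : 0 < K)
    (Ω : Type) [MeasurableSpace Ω] (Pr : Measure Ω)
    (T : EucSp d → Ω → Ω) (φ0 : Ω → ℝ)
    (lam : ℝ) (hlam : 0 < lam) (ℓ : EucSp d) (hℓ : ‖ℓ‖ = 1)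
    (P : EucSp d → Ω → Measure (PathSp d))
    (henv : GradEnv d η β' K Pr T φ0 lam ℓ P)
    -- (i) Markov property of the quenched laws
    (hMarkov : ∀ (x : EucSp d) (ω : Ω) (s : ℝ≥0) (F : PathSp d → ℝ),
      Measurable F → (∃ M, ∀ w, |F w| ≤ M) →
      ∀ A : Set (PathSp d), MeasurableSet[pathσ d s] A →
        ∫ w in A, F (shift s w) ∂(P x ω) =
          ∫ w in A, (∫ w', F w' ∂(P (w s) ω)) ∂(P x ω))
    -- (ii) jointly measurable transition densities with a Gaussian upper bound
    (p : Ω → ℝ≥0 → EucSp d → EucSp d → ℝ) (ct cg : ℝ) (hct : 0 < ct) (hcg : 0 < cg)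
    (hp_meas : ∀ ω, Measurable fun q : ℝ≥0 × EucSp d × EucSp d => p ω q.1 q.2.1 q.2.2)
    (hp : ∀ (ω) (x : EucSp d) (t : ℝ≥0), 0 < t → ∀ A : Set (EucSp d), MeasurableSet A →
      P x ω {w | w t ∈ A} = ENNReal.ofReal (∫ y in A, p ω t x y))
    (hgauss : ∀ (ω) (x y : EucSp d) (t : ℝ≥0), 0 < t → (t : ℝ) ≤ 1 →
      p ω t x y ≤ ct * (t : ℝ) ^ (-(d : ℝ) / 2) * Real.exp (-(cg * ‖x - y‖ ^ 2) / t))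
    -- (iii) spectral gap for the killed semigroups in `L²(m_ω)`
    (c₃ : ℝ) (hc₃ : 0 < c₃)
    (hgap : ∀ (ω) (U : Set (EucSp d)), U.Nonempty → IsOpen U →
      ∀ (t : ℝ≥0) (f : EucSp d → ℝ), Measurable f →
      Integrable (fun x => (f x) ^ 2 * Real.exp (2 * psiF T φ0 lam ℓ ω x)) volume →
      ∫ x, (killedSg P ω U t f x) ^ 2 * Real.exp (2 * psiF T φ0 lam ℓ ω x) ≤
        Real.exp (-2 * c₃ * (t : ℝ)) *
          ∫ x, (f x) ^ 2 * Real.exp (2 * psiF T φ0 lam ℓ ω x)) :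
    ∀ δ : ℝ, 0 < δ → δ < 1 → ∀ b > (0:ℝ), ∃ c₄ > (0:ℝ),
      ∀ ℓ' : EucSp d, ‖ℓ'‖ = 1 → Real.sqrt (1 - δ ^ 2) < ⟪ℓ', ℓ⟫ →
      ∀ L > (0:ℝ), ∀ ω : Ω,
        P 0 ω {w | ∀ t : ℝ≥0, (t : ℝ) < 3 * lam / c₃ * L →
            w t ∈ cyl ℓ' b L (L / Real.sqrt δ)} ≤
          ENNReal.ofReal (c₄ * Real.exp (-(lam / 2) * L)) := by
  obtain ⟨hPr, hT0, hTadd, hTjm, hTmp, hφm, hφb, hφd, hgb, hgl, hPm, hMP, huniq⟩ := henv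
  intro δ hδ0 hδ1 b hb
  have hsδ : 0 < Real.sqrt δ := Real.sqrt_pos.2 hδ0
  set Cρ : ℝ := 1 + b + 1 / Real.sqrt δ with hCρdef
  have hCρ : 0 < Cρ := by positivity
  set CB : ℝ := ∫ v : EucSp d, Real.exp (-cg * ‖v‖ ^ 2) with hCBdef
  have hCB0 : 0 ≤ CB := integral_nonneg fun v => (Real.exp_pos _).le
  set C₁ : ℝ := ct ^ 2 * Real.exp (2 * η + lam ^ 2 / cg) with hC₁def
  have hC₁ : 0 < C₁ := by positivity
  set κd : ℝ := (volume (Metric.ball (0 : EucSp d) 1)).toReal with hκddef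
  have hκd0 : 0 ≤ κd := ENNReal.toReal_nonneg
  set Dfac : ℝ := (2 * Cρ / lam) ^ d * (Nat.factorial d : ℝ) with hDfacdef
  have hDfac0 : 0 ≤ Dfac := by positivity
  set D : ℝ := (1 / 2) * Real.exp (2 * c₃ + 2 * η) * (Dfac * κd + C₁ * CB) with hDdef
  have hD0 : 0 ≤ D := by positivity
  refine ⟨D + Real.exp (c₃ / 3) + 1, by positivity, ?_⟩
  intro ℓ' hℓ'n hip L hL ω
  haveI hP0prob : IsProbabilityMeasure (P 0 ω) := (hMP 0 ω).1
  set ψ : EucSp d → ℝ := psiF T φ0 lam ℓ ω with hψdef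
  have hψcont : Continuous ψ := by
    rw [hψdef]
    exact ((hφd ω).continuous).add (continuous_const.mul (continuous_const.inner continuous_id))
  set ρ : ℝ := L / Real.sqrt δ with hρdef
  have hρ0 : 0 < ρ := by positivity
  set U : Set (EucSp d) := cyl ℓ' b L ρ with hUdef
  set R : ℝ := Cρ * L with hRdef
  have hR0 : 0 ≤ R := by positivity
  set SS : Set (EucSp d) := {x : EucSp d | ⟪ℓ, x⟫ ≤ 2 * L} ∩ Metric.closedBall 0 R
    with hSSdef
  have hgeom := cyl_subset ℓ ℓ' hℓ hℓ'n δ b L hδ0 hδ1 hb hL hip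
  have hUS : U ⊆ SS := by
    intro x hx
    refine ⟨(hgeom x hx).1, ?_⟩
    rw [Metric.mem_closedBall, dist_zero_right]
    exact le_trans (hgeom x hx).2 (by rw [hRdef])
  have hUball : U ⊆ Metric.closedBall 0 R := fun x hx => (hUS hx).2
  have hSmeas : MeasurableSet SS := by
    apply MeasurableSet.inter ?_ measurableSet_closedBall
    exact measurableSet_le ((continuous_const.inner continuous_id).measurable)
      measurable_const
  have hUopen : IsOpen U := by
    have h1 : Continuous fun x : EucSp d => ⟪x, ℓ'⟫ :=
      continuous_id.inner continuous_const
    have h2 : Continuous fun x : EucSp d => ‖x - ⟪x, ℓ'⟫ • ℓ'‖ :=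
      (continuous_id.sub (h1.smul continuous_const)).norm
    have h3 : U = {x : EucSp d | -(b * L) < ⟪x, ℓ'⟫} ∩
        ({x : EucSp d | ⟪x, ℓ'⟫ < L} ∩ {x : EucSp d | ‖x - ⟪x, ℓ'⟫ • ℓ'‖ < ρ}) := rfl
    rw [h3]
    exact (isOpen_lt continuous_const h1).inter
      ((isOpen_lt h1 continuous_const).inter (isOpen_lt h2 continuous_const))
  have hU0 : (0 : EucSp d) ∈ U := by
    refine ⟨?_, ?_, ?_⟩
    · rw [inner_zero_left]; nlinarith
    · rw [inner_zero_left]; exact hL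
    · rw [inner_zero_left, zero_smul, sub_zero, norm_zero]; exact hρ0
  rcases lt_or_ge L (2 * c₃ / (3 * lam)) with hsmall | hlarge
  · -- small L
    refine le_trans prob_le_one ?_
    rw [← ENNReal.ofReal_one]
    apply ENNReal.ofReal_le_ofReal
    have h1 : Real.exp (lam / 2 * L) ≤ Real.exp (c₃ / 3) := by
      apply Real.exp_le_exp.2
      rw [lt_div_iff₀ (by positivity : (0:ℝ) < 3 * lam)] at hsmall
      linarith
    have h2 : Real.exp (lam / 2 * L) * Real.exp (-(lam / 2) * L) = 1 := by
      rw [← Real.exp_add]; ring_nf; exact Real.exp_zero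
    calc (1:ℝ) = Real.exp (lam / 2 * L) * Real.exp (-(lam / 2) * L) := h2.symm
    _ ≤ Real.exp (c₃ / 3) * Real.exp (-(lam / 2) * L) :=
        mul_le_mul_of_nonneg_right h1 (Real.exp_pos _).le
    _ ≤ (D + Real.exp (c₃ / 3) + 1) * Real.exp (-(lam / 2) * L) :=
        mul_le_mul_of_nonneg_right (by linarith) (Real.exp_pos _).le
  · -- large L
    set u : ℝ := 3 * lam / c₃ * L with hudef
    have hu2 : 2 ≤ u := by
      have h3l : (0:ℝ) < 3 * lam / c₃ := by positivity
      calc (2:ℝ) = 3 * lam / c₃ * (2 * c₃ / (3 * lam)) := by field_simp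
      _ ≤ u := by rw [hudef]; exact mul_le_mul_of_nonneg_left hlarge h3l.le
    set t₁ : ℝ≥0 := Real.toNNReal (u - 2) with ht₁def
    have ht₁ : (t₁ : ℝ) = u - 2 := Real.coe_toNNReal _ (by linarith)
    set f : EucSp d → ℝ := Set.indicator SS (fun _ => (1:ℝ)) with hfdef
    have hfmeas : Measurable f := measurable_const.indicator hSmeas
    have hf01 : ∀ x, 0 ≤ f x ∧ f x ≤ 1 := by
      intro x
      by_cases hx : x ∈ SS
      · simp only [hfdef, Set.indicator_of_mem hx]; norm_num
      · simp only [hfdef, Set.indicator_of_notMem hx]; norm_num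
    set G : Set (PathSp d) := {w : PathSp d | ∀ s ≤ t₁, w s ∈ U} with hGdef
    have hGopen : IsOpen G := isOpen_stay U hUopen t₁
    have hGmeas : MeasurableSet G := hGopen.measurableSet
    set F : PathSp d → ℝ := fun w => Set.indicator G (fun w' => f (w' t₁)) w with hFdef
    have hFmeas : Measurable F :=
      Measurable.indicator
        (hfmeas.comp (ContinuousEvalConst.continuous_eval_const t₁).measurable) hGmeas
    have hF01 : ∀ w, 0 ≤ F w ∧ F w ≤ 1 := by
      intro w
      by_cases hw : w ∈ G
      · simp only [hFdef, Set.indicator_of_mem hw]; exact hf01 _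
      · simp only [hFdef, Set.indicator_of_notMem hw]; norm_num
    set g : EucSp d → ℝ := killedSg P ω U t₁ f with hgdef
    have hgF : ∀ y, g y = ∫ w, F w ∂(P y ω) := fun y => rfl
    have hshift_law : ∀ y, P y ω = (P 0 (T y ω)).map (pathAdd y) := fun y =>
      quenchedShift T φ0 lam ℓ K P hTadd hφd hgl hMP huniq ω y
    have hgmeas : Measurable g := by
      have h := integral_quenched_measurable T P ω F hFmeas hshift_law (hPm 0)
        (hTjm.comp (measurable_id.prodMk measurable_const))
        (fun y => (hMP 0 (T y ω)).1)
      have h2 : g = fun y => ∫ w, F w ∂(P y ω) := funext hgF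
      rw [h2]; exact h
    have hg0 : ∀ y, 0 ≤ g y := fun y => by
      rw [hgF]; exact integral_nonneg fun w => (hF01 w).1
    have hFint : ∀ y, Integrable F (P y ω) := by
      intro y
      haveI : IsProbabilityMeasure (P y ω) := (hMP y ω).1
      exact Integrable.mono' (integrable_const 1) hFmeas.aestronglyMeasurable
        (ae_of_all _ fun w => by
          rw [Real.norm_eq_abs, abs_of_nonneg (hF01 w).1]; exact (hF01 w).2)
    have hg1 : ∀ y, g y ≤ 1 := by
      intro y
      haveI : IsProbabilityMeasure (P y ω) := (hMP y ω).1
      rw [hgF]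
      calc ∫ w, F w ∂(P y ω) ≤ ∫ _, (1:ℝ) ∂(P y ω) :=
        integral_mono (hFint y) (integrable_const 1) (fun w => (hF01 w).2)
      _ = 1 := by simp
    have hgsupp : ∀ y, y ∉ U → g y = 0 := by
      intro y hy
      rw [hgF]
      apply integral_eq_zero_of_ae
      filter_upwards [(hMP y ω).2.1] with w hw
      simp only [hFdef]
      apply Set.indicator_of_notMem
      intro hwG
      exact hy (hw ▸ hwG 0 (zero_le'))
    set E₂ : Set (PathSp d) := shift 1 ⁻¹' G with hE₂def
    have hE₂meas : MeasurableSet E₂ := hGmeas.preimage (continuous_shift' 1).measurable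
    have hEsub : {w : PathSp d | ∀ t : ℝ≥0, (t : ℝ) < u → w t ∈ U} ⊆ E₂ := by
      intro w hw
      intro s hs
      show w (1 + s) ∈ U
      apply hw
      push_cast
      have : (s : ℝ) ≤ (t₁ : ℝ) := hs
      rw [ht₁] at this
      linarith
    have hFshift : ∀ w, F (shift 1 w) = Set.indicator E₂ (fun _ => (1:ℝ)) w := by
      intro w
      by_cases hw : shift 1 w ∈ G
      · have h1 : (shift 1 w) t₁ ∈ U := hw t₁ le_rfl
        have h2 : (shift 1 w) t₁ ∈ SS := hUS h1
        rw [Set.indicator_of_mem (show w ∈ E₂ from hw)]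
        simp only [hFdef, Set.indicator_of_mem hw, hfdef, Set.indicator_of_mem h2]
      · rw [Set.indicator_of_notMem (show w ∉ E₂ from hw)]
        simp only [hFdef, Set.indicator_of_notMem hw]
    have hMk := hMarkov 0 ω 1 F hFmeas
      ⟨1, fun w => abs_le.2 ⟨by linarith [(hF01 w).1], (hF01 w).2⟩⟩
      Set.univ MeasurableSet.univ
    simp only [Measure.restrict_univ] at hMk
    have hgF' : ∀ w : PathSp d, (∫ w', F w' ∂(P (w 1) ω)) = g (w 1) := fun w =>
      (hgF (w 1)).symm
    simp only [hgF'] at hMk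
    have hLHS : ∫ w, F (shift 1 w) ∂(P 0 ω) = ((P 0 ω) E₂).toReal := by
      simp only [hFshift]
      rw [integral_indicator_const (1:ℝ) hE₂meas]
      simp
      rfl
    have hevm : Measurable (fun w : PathSp d => w 1) :=
      (ContinuousEvalConst.continuous_eval_const 1).measurable
    set μ : Measure (EucSp d) := (P 0 ω).map (fun w => w (1:ℝ≥0)) with hμdef
    haveI hμprob : IsProbabilityMeasure μ := Measure.isProbabilityMeasure_map hevm.aemeasurable
    have hgIntμ : Integrable g μ := Integrable.mono' (integrable_const 1)
      hgmeas.aestronglyMeasurable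
      (ae_of_all _ fun y => by
        rw [Real.norm_eq_abs, abs_of_nonneg (hg0 y)]; exact hg1 y)
    have hmap : ∫ w, g (w 1) ∂(P 0 ω) = ∫ y, g y ∂μ :=
      (integral_map hevm.aemeasurable hgmeas.aestronglyMeasurable).symm
    have hp1meas : Measurable (fun y => p ω 1 0 y) :=
      (hp_meas ω).comp (measurable_const.prodMk (measurable_const.prodMk measurable_id))
    have hp1int : Integrable (fun y => p ω 1 0 y) := by
      by_contra hni
      have h1 := hp ω 0 1 (by norm_num) Set.univ MeasurableSet.univ
      have h2 : {w : PathSp d | w 1 ∈ Set.univ} = Set.univ := by ext; simp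
      rw [h2, measure_univ] at h1
      rw [Measure.restrict_univ, integral_undef hni] at h1
      simp at h1
    have hμle : μ ≤ volume.withDensity (fun y => ENNReal.ofReal (p ω 1 0 y)) := by
      rw [Measure.le_iff]
      intro A hA
      rw [hμdef, Measure.map_apply hevm hA, withDensity_apply _ hA]
      have hset : (fun w : PathSp d => w (1:ℝ≥0)) ⁻¹' A = {w : PathSp d | w 1 ∈ A} := rfl
      rw [hset, hp ω 0 1 (by norm_num) A hA]
      calc ENNReal.ofReal (∫ y in A, p ω 1 0 y)
          ≤ ENNReal.ofReal (∫ y in A, max (p ω 1 0 y) 0) := by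
            apply ENNReal.ofReal_le_ofReal
            exact integral_mono hp1int.integrableOn hp1int.pos_part.integrableOn
              fun y => le_max_left _ _
        _ = ∫⁻ y in A, ENNReal.ofReal (max (p ω 1 0 y) 0) :=
            ofReal_integral_eq_lintegral_ofReal hp1int.pos_part.integrableOn
              (ae_of_all _ fun y => le_max_right _ _)
        _ = ∫⁻ y in A, ENNReal.ofReal (p ω 1 0 y) := by
            apply lintegral_congr
            intro y
            rcases le_total (p ω 1 0 y) 0 with h | h
            · rw [max_eq_right h, ENNReal.ofReal_of_nonpos le_rfl,
                ENNReal.ofReal_of_nonpos h]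
            · rw [max_eq_left h]
    -- integrability facts for the gap estimate
    have hexp2ψcont : Continuous fun y => Real.exp (2 * ψ y) :=
      Real.continuous_exp.comp (continuous_const.mul hψcont)
    have hψball_int : IntegrableOn (fun y => Real.exp (2 * ψ y))
        (Metric.closedBall (0 : EucSp d) R) :=
      hexp2ψcont.continuousOn.integrableOn_compact (isCompact_closedBall 0 R)
    have hSS_int : IntegrableOn (fun y => Real.exp (2 * ψ y)) SS :=
      hψball_int.mono_set inter_subset_right
    have heq : (fun x => f x ^ 2 * Real.exp (2 * ψ x))
        = Set.indicator SS (fun x => Real.exp (2 * ψ x)) := by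
      funext x
      by_cases hx : x ∈ SS
      · simp only [hfdef, Set.indicator_of_mem hx]; norm_num
      · simp only [hfdef, Set.indicator_of_notMem hx]; norm_num
    have hfint : Integrable (fun x => f x ^ 2 * Real.exp (2 * psiF T φ0 lam ℓ ω x)) := by
      rw [← hψdef, heq]
      exact hSS_int.integrable_indicator hSmeas
    have hgapA := hgap ω U ⟨0, hU0⟩ hUopen t₁ f hfmeas hfint
    rw [← hψdef, ← hgdef] at hgapA
    have hg2int : Integrable (fun y => g y ^ 2 * Real.exp (2 * ψ y)) := by
      apply Integrable.mono' (hψball_int.integrable_indicator measurableSet_closedBall)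
      · exact ((hgmeas.pow_const 2).mul hexp2ψcont.measurable).aestronglyMeasurable
      · apply ae_of_all
        intro y
        rw [Real.norm_eq_abs, abs_of_nonneg (by positivity)]
        by_cases hy : y ∈ Metric.closedBall (0 : EucSp d) R
        · rw [Set.indicator_of_mem hy]
          have h1 := hg1 y
          have h0 := hg0 y
          have h2 : g y ^ 2 ≤ 1 := by nlinarith
          have h3 := Real.exp_pos (2 * ψ y)
          have h4 := mul_le_mul_of_nonneg_right h2 h3.le
          linarith
        · rw [Set.indicator_of_notMem hy]
          have : y ∉ U := fun hyU => hy (hUball hyU)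
          rw [hgsupp y this]
          norm_num
    have hSSvol : volume SS ≠ ⊤ :=
      (lt_of_le_of_lt (measure_mono inter_subset_right)
        (measure_closedBall_lt_top)).ne
    have hvolSS : (volume SS).toReal ≤ R ^ d * κd := by
      have h1 : volume SS ≤ volume (Metric.closedBall (0 : EucSp d) R) :=
        measure_mono inter_subset_right
      have h2 : volume (Metric.closedBall (0 : EucSp d) R)
          = ENNReal.ofReal (R ^ d) * volume (Metric.ball (0 : EucSp d) 1) := by
        rw [Measure.addHaar_closedBall _ _ hR0, finrank_euclideanSpace_fin]
      have h3 : (volume (Metric.closedBall (0 : EucSp d) R)).toReal = R ^ d * κd := by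
        rw [h2, ENNReal.toReal_mul, ENNReal.toReal_ofReal (by positivity), hκddef]
      rw [← h3]
      exact ENNReal.toReal_mono measure_closedBall_lt_top.ne h1
    have hSSbound : ∫ x, f x ^ 2 * Real.exp (2 * ψ x)
        ≤ Real.exp (2 * η + 4 * lam * L) * (R ^ d * κd) := by
      rw [heq, integral_indicator hSmeas]
      calc ∫ x in SS, Real.exp (2 * ψ x)
          ≤ ∫ _ in SS, Real.exp (2 * η + 4 * lam * L) := by
            apply setIntegral_mono_on hSS_int
              (integrableOn_const hSSvol) hSmeas
            intro x hx
            apply Real.exp_le_exp.2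
            have hφx := (abs_le.1 (hφb (T x ω))).2
            have hπ : ⟪ℓ, x⟫ ≤ 2 * L := hx.1
            rw [hψdef]
            simp only [psiF]
            have h5 := mul_le_mul_of_nonneg_left hπ hlam.le
            linarith
        _ = (volume SS).toReal * Real.exp (2 * η + 4 * lam * L) := by
            rw [setIntegral_const]; rw [smul_eq_mul]; rfl
        _ ≤ (R ^ d * κd) * Real.exp (2 * η + 4 * lam * L) := by
            exact mul_le_mul_of_nonneg_right hvolSS (Real.exp_pos _).le
        _ = Real.exp (2 * η + 4 * lam * L) * (R ^ d * κd) := by ring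
    set β : ℝ := Real.exp (c₃ * (t₁ : ℝ) - 2 * lam * L) with hβdef
    have hβ : 0 < β := Real.exp_pos _
    have hptwise : ∀ y, ENNReal.ofReal (p ω 1 0 y) * ENNReal.ofReal (g y)
        ≤ ENNReal.ofReal ((β / 2) * (g y ^ 2 * Real.exp (2 * ψ y))
          + (1 / (2 * β)) * (C₁ * Real.exp (-cg * ‖y‖ ^ 2))) := by
      intro y
      set q : ℝ := max (p ω 1 0 y) 0 with hq
      have hq0 : 0 ≤ q := le_max_right _ _
      have hofq : ENNReal.ofReal (p ω 1 0 y) = ENNReal.ofReal q := by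
        rcases le_total (p ω 1 0 y) 0 with h | h
        · rw [hq, max_eq_right h, ENNReal.ofReal_of_nonpos le_rfl,
            ENNReal.ofReal_of_nonpos h]
        · rw [hq, max_eq_left h]
      rw [hofq, ← ENNReal.ofReal_mul hq0]
      apply ENNReal.ofReal_le_ofReal
      have hqle : q ≤ ct * Real.exp (-cg * ‖y‖ ^ 2) := by
        apply max_le ?_ (by positivity)
        have hg1 := hgauss ω 0 y 1 (by norm_num) (by norm_num)
        have h2 : ((1 : ℝ≥0) : ℝ) = (1:ℝ) := rfl
        rw [h2] at hg1
        rw [Real.one_rpow, mul_one, zero_sub, norm_neg, div_one] at hg1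
        calc p ω 1 0 y ≤ ct * Real.exp (-(cg * ‖y‖ ^ 2)) := hg1
        _ = ct * Real.exp (-cg * ‖y‖ ^ 2) := by ring_nf
      have hψub : -ψ y ≤ η + lam * ‖y‖ := by
        have h1 := (abs_le.1 (hφb (T y ω))).1
        have h2 : |⟪ℓ, y⟫| ≤ ‖y‖ := by
          calc |⟪ℓ, y⟫| ≤ ‖ℓ‖ * ‖y‖ := abs_real_inner_le_norm _ _
          _ = ‖y‖ := by rw [hℓ]; ring
        have h2' := (abs_le.1 h2).1
        have h3 : lam * (-⟪ℓ, y⟫) ≤ lam * ‖y‖ :=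
          mul_le_mul_of_nonneg_left (by linarith) hlam.le
        rw [hψdef]
        simp only [psiF]
        linarith
      have hexpψ : Real.exp (ψ y) * Real.exp (-ψ y) = 1 := by
        rw [← Real.exp_add]; ring_nf; exact Real.exp_zero
      have h2exp : Real.exp (2 * ψ y) = Real.exp (ψ y) * Real.exp (ψ y) := by
        rw [← Real.exp_add]; ring_nf
      have h2exp' : Real.exp (-2 * ψ y) = Real.exp (-ψ y) * Real.exp (-ψ y) := by
        rw [← Real.exp_add]; ring_nf
      have key : q * g y ≤ (β / 2) * (g y ^ 2 * Real.exp (2 * ψ y))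
          + (1 / (2 * β)) * (q ^ 2 * Real.exp (-2 * ψ y)) := by
        have habeq : q * g y
            = (g y * Real.exp (ψ y)) * (q * Real.exp (-ψ y)) := by
          calc q * g y = (q * g y) * (Real.exp (ψ y) * Real.exp (-ψ y)) := by rw [hexpψ, mul_one]
          _ = (g y * Real.exp (ψ y)) * (q * Real.exp (-ψ y)) := by ring
        have ha2 : g y ^ 2 * Real.exp (2 * ψ y) = (g y * Real.exp (ψ y)) ^ 2 := by
          rw [h2exp]; ring
        have hb2 : q ^ 2 * Real.exp (-2 * ψ y) = (q * Real.exp (-ψ y)) ^ 2 := by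
          rw [h2exp']; ring
        rw [habeq, ha2, hb2]
        set A : ℝ := g y * Real.exp (ψ y)
        set B : ℝ := q * Real.exp (-ψ y)
        have h2β : (0:ℝ) < 2 * β := by positivity
        have hident : β / 2 * A ^ 2 + 1 / (2 * β) * B ^ 2 - A * B
            = (β * A - B) ^ 2 / (2 * β) := by
          field_simp
          ring
        linarith [div_nonneg (sq_nonneg (β * A - B)) h2β.le, hident.ge, hident.le]
      have hbb : q ^ 2 * Real.exp (-2 * ψ y) ≤ C₁ * Real.exp (-cg * ‖y‖ ^ 2) := by
        have hq2 : q ^ 2 ≤ ct ^ 2 * Real.exp (-(2 * cg) * ‖y‖ ^ 2) := by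
          have h1 := pow_le_pow_left₀ hq0 hqle 2
          have hE2 : Real.exp (-cg * ‖y‖ ^ 2) ^ 2 = Real.exp (-(2 * cg) * ‖y‖ ^ 2) := by
            rw [pow_two, ← Real.exp_add]
            congr 1
            ring
          have h2 : (ct * Real.exp (-cg * ‖y‖ ^ 2)) ^ 2
              = ct ^ 2 * Real.exp (-(2 * cg) * ‖y‖ ^ 2) := by
            rw [mul_pow, hE2]
          rw [← h2]; exact h1
        have hexp_e : Real.exp (-2 * ψ y) ≤ Real.exp (2 * η + 2 * lam * ‖y‖) := by
          apply Real.exp_le_exp.2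
          linarith
        calc q ^ 2 * Real.exp (-2 * ψ y)
            ≤ (ct ^ 2 * Real.exp (-(2 * cg) * ‖y‖ ^ 2))
              * Real.exp (2 * η + 2 * lam * ‖y‖) := by
              apply mul_le_mul hq2 hexp_e (Real.exp_pos _).le (by positivity)
          _ = ct ^ 2 * Real.exp (-(2 * cg) * ‖y‖ ^ 2 + (2 * η + 2 * lam * ‖y‖)) := by
              rw [mul_assoc, ← Real.exp_add]
          _ ≤ ct ^ 2 * Real.exp ((2 * η + lam ^ 2 / cg) + (-cg * ‖y‖ ^ 2)) := by
              apply mul_le_mul_of_nonneg_left ?_ (by positivity)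
              apply Real.exp_le_exp.2
              have hident2 : (2 * η + lam ^ 2 / cg) + (-cg * ‖y‖ ^ 2)
                  - (-(2 * cg) * ‖y‖ ^ 2 + (2 * η + 2 * lam * ‖y‖))
                  = (cg * ‖y‖ - lam) ^ 2 / cg := by
                field_simp
                ring
              linarith [div_nonneg (sq_nonneg (cg * ‖y‖ - lam)) hcg.le, hident2.ge, hident2.le]
          _ = C₁ * Real.exp (-cg * ‖y‖ ^ 2) := by
              rw [hC₁def, Real.exp_add]; ring
      calc q * g y ≤ (β / 2) * (g y ^ 2 * Real.exp (2 * ψ y))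
          + (1 / (2 * β)) * (q ^ 2 * Real.exp (-2 * ψ y)) := key
      _ ≤ (β / 2) * (g y ^ 2 * Real.exp (2 * ψ y))
          + (1 / (2 * β)) * (C₁ * Real.exp (-cg * ‖y‖ ^ 2)) := by
          apply add_le_add le_rfl
          exact mul_le_mul_of_nonneg_left hbb (by positivity)
    have hIg2nn : 0 ≤ ∫ y, g y ^ 2 * Real.exp (2 * ψ y) :=
      integral_nonneg fun y => by positivity
    have chain1 : P 0 ω {w | ∀ t : ℝ≥0, (t : ℝ) < u → w t ∈ U}
        ≤ ENNReal.ofReal ((β / 2) * (∫ y, g y ^ 2 * Real.exp (2 * ψ y))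
          + (1 / (2 * β)) * (C₁ * CB)) := by
      calc P 0 ω {w | ∀ t : ℝ≥0, (t : ℝ) < u → w t ∈ U}
          ≤ P 0 ω E₂ := measure_mono hEsub
        _ = ENNReal.ofReal (((P 0 ω) E₂).toReal) :=
            (ENNReal.ofReal_toReal (measure_ne_top _ _)).symm
        _ = ENNReal.ofReal (∫ w, F (shift 1 w) ∂(P 0 ω)) := by rw [hLHS]
        _ = ENNReal.ofReal (∫ y, g y ∂μ) := by rw [hMk, hmap]
        _ = ∫⁻ y, ENNReal.ofReal (g y) ∂μ :=
            ofReal_integral_eq_lintegral_ofReal hgIntμ (ae_of_all _ hg0)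
        _ ≤ ∫⁻ y, ENNReal.ofReal (g y)
              ∂(volume.withDensity fun y => ENNReal.ofReal (p ω 1 0 y)) :=
            lintegral_mono' hμle le_rfl
        _ = ∫⁻ y, ENNReal.ofReal (p ω 1 0 y) * ENNReal.ofReal (g y) := by
            rw [lintegral_withDensity_eq_lintegral_mul volume
              hp1meas.ennreal_ofReal hgmeas.ennreal_ofReal]
            rfl
        _ ≤ ∫⁻ y, ENNReal.ofReal ((β / 2) * (g y ^ 2 * Real.exp (2 * ψ y))
              + (1 / (2 * β)) * (C₁ * Real.exp (-cg * ‖y‖ ^ 2))) :=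
            lintegral_mono fun y => hptwise y
        _ = (∫⁻ y, ENNReal.ofReal ((β / 2) * (g y ^ 2 * Real.exp (2 * ψ y))))
            + ∫⁻ y, ENNReal.ofReal ((1 / (2 * β)) * (C₁ * Real.exp (-cg * ‖y‖ ^ 2))) := by
            have hofadd : ∀ y, ENNReal.ofReal ((β / 2) * (g y ^ 2 * Real.exp (2 * ψ y))
                + (1 / (2 * β)) * (C₁ * Real.exp (-cg * ‖y‖ ^ 2)))
                = ENNReal.ofReal ((β / 2) * (g y ^ 2 * Real.exp (2 * ψ y)))
                + ENNReal.ofReal ((1 / (2 * β)) * (C₁ * Real.exp (-cg * ‖y‖ ^ 2))) := by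
              intro y
              apply ENNReal.ofReal_add
              · positivity
              · positivity
            simp only [hofadd]
            apply lintegral_add_left
            apply Measurable.ennreal_ofReal
            exact (((hgmeas.pow_const 2).mul hexp2ψcont.measurable).const_mul _)
        _ = ENNReal.ofReal ((β / 2) * (∫ y, g y ^ 2 * Real.exp (2 * ψ y)))
            + ENNReal.ofReal ((1 / (2 * β)) * (C₁ * CB)) := by
            congr 1
            · rw [← ofReal_integral_eq_lintegral_ofReal (hg2int.const_mul _)
                (ae_of_all _ fun y => by positivity)]
              rw [integral_const_mul]
            · rw [← ofReal_integral_eq_lintegral_ofReal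
                (((gauss_integrable cg hcg).const_mul _).const_mul _)
                (ae_of_all _ fun y => by positivity)]
              rw [integral_const_mul, integral_const_mul, hCBdef]
        _ = ENNReal.ofReal ((β / 2) * (∫ y, g y ^ 2 * Real.exp (2 * ψ y))
            + (1 / (2 * β)) * (C₁ * CB)) := by
            rw [← ENNReal.ofReal_add (by positivity) (by positivity)]
    have hc₃t₁ : c₃ * (t₁ : ℝ) = 3 * lam * L - 2 * c₃ := by
      rw [ht₁, hudef]
      field_simp
    have hRd : R ^ d ≤ Dfac * Real.exp (lam * L / 2) := by
      have hx : (0:ℝ) ≤ lam * L / 2 := by positivity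
      have h1 := Real.pow_div_factorial_le_exp (x := lam * L / 2) hx d
      have hfact : (0:ℝ) < (Nat.factorial d : ℝ) :=
        Nat.cast_pos.2 (Nat.factorial_pos d)
      have h2 : (lam * L / 2) ^ d ≤ (Nat.factorial d : ℝ) * Real.exp (lam * L / 2) := by
        rw [div_le_iff₀ hfact] at h1
        linarith
      have hRe : R = (2 * Cρ / lam) * (lam * L / 2) := by
        rw [hRdef]; field_simp
      calc R ^ d = (2 * Cρ / lam) ^ d * (lam * L / 2) ^ d := by rw [hRe, mul_pow]
      _ ≤ (2 * Cρ / lam) ^ d * ((Nat.factorial d : ℝ) * Real.exp (lam * L / 2)) :=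
          mul_le_mul_of_nonneg_left h2 (by positivity)
      _ = Dfac * Real.exp (lam * L / 2) := by rw [hDfacdef]; ring
    have hI2 : ∫ y, g y ^ 2 * Real.exp (2 * ψ y)
        ≤ Real.exp (-2 * c₃ * (t₁ : ℝ)) * (Real.exp (2 * η + 4 * lam * L) * (R ^ d * κd)) :=
      le_trans hgapA (mul_le_mul_of_nonneg_left hSSbound (Real.exp_pos _).le)
    have hprod1 : β * Real.exp (-2 * c₃ * (t₁ : ℝ)) * Real.exp (2 * η + 4 * lam * L)
        = Real.exp (2 * c₃ + 2 * η) * Real.exp (-lam * L) := by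
      rw [hβdef, ← Real.exp_add, ← Real.exp_add, ← Real.exp_add]
      congr 1
      linarith [hc₃t₁]
    have hm1 : (β / 2) * (∫ y, g y ^ 2 * Real.exp (2 * ψ y))
        ≤ (1 / 2) * Real.exp (2 * c₃ + 2 * η) * (Dfac * κd) * Real.exp (-(lam / 2) * L) := by
      calc (β / 2) * (∫ y, g y ^ 2 * Real.exp (2 * ψ y))
          ≤ (β / 2) * (Real.exp (-2 * c₃ * (t₁ : ℝ))
            * (Real.exp (2 * η + 4 * lam * L) * (R ^ d * κd))) :=
            mul_le_mul_of_nonneg_left hI2 (by positivity)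
        _ = (1 / 2) * (β * Real.exp (-2 * c₃ * (t₁ : ℝ))
            * Real.exp (2 * η + 4 * lam * L)) * (R ^ d * κd) := by ring
        _ = (1 / 2) * (Real.exp (2 * c₃ + 2 * η) * Real.exp (-lam * L)) * (R ^ d * κd) := by
            rw [hprod1]
        _ ≤ (1 / 2) * (Real.exp (2 * c₃ + 2 * η) * Real.exp (-lam * L))
            * (Dfac * Real.exp (lam * L / 2) * κd) := by
            apply mul_le_mul_of_nonneg_left ?_ (by positivity)
            exact mul_le_mul_of_nonneg_right hRd hκd0
        _ = (1 / 2) * Real.exp (2 * c₃ + 2 * η) * (Dfac * κd)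
            * (Real.exp (-lam * L) * Real.exp (lam * L / 2)) := by ring
        _ = (1 / 2) * Real.exp (2 * c₃ + 2 * η) * (Dfac * κd)
            * Real.exp (-(lam / 2) * L) := by
            rw [← Real.exp_add]
            congr 1
            ring
    have hm2 : (1 / (2 * β)) * (C₁ * CB)
        ≤ (1 / 2) * Real.exp (2 * c₃ + 2 * η) * (C₁ * CB) * Real.exp (-(lam / 2) * L) := by
      have hβinv : (1:ℝ) / (2 * β) = (1 / 2) * Real.exp (-(c₃ * (t₁ : ℝ) - 2 * lam * L)) := by
        rw [hβdef, Real.exp_neg]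
        ring
      have hprod2 : Real.exp (-(c₃ * (t₁ : ℝ) - 2 * lam * L))
          ≤ Real.exp (2 * c₃ + 2 * η) * Real.exp (-(lam / 2) * L) := by
        rw [← Real.exp_add]
        apply Real.exp_le_exp.2
        rw [hc₃t₁]
        have hlL : 0 ≤ lam * L := by positivity
        linarith
      calc (1 / (2 * β)) * (C₁ * CB)
          = (1 / 2) * Real.exp (-(c₃ * (t₁ : ℝ) - 2 * lam * L)) * (C₁ * CB) := by
            rw [hβinv]
        _ ≤ (1 / 2) * (Real.exp (2 * c₃ + 2 * η) * Real.exp (-(lam / 2) * L)) * (C₁ * CB) := by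
            apply mul_le_mul_of_nonneg_right ?_ (by positivity)
            exact mul_le_mul_of_nonneg_left hprod2 (by norm_num)
        _ = (1 / 2) * Real.exp (2 * c₃ + 2 * η) * (C₁ * CB) * Real.exp (-(lam / 2) * L) := by
            ring
    have hfinal : (β / 2) * (∫ y, g y ^ 2 * Real.exp (2 * ψ y))
        + (1 / (2 * β)) * (C₁ * CB)
        ≤ (D + Real.exp (c₃ / 3) + 1) * Real.exp (-(lam / 2) * L) := by
      have hsum : (1 / 2) * Real.exp (2 * c₃ + 2 * η) * (Dfac * κd) * Real.exp (-(lam / 2) * L)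
          + (1 / 2) * Real.exp (2 * c₃ + 2 * η) * (C₁ * CB) * Real.exp (-(lam / 2) * L)
          = D * Real.exp (-(lam / 2) * L) := by
        rw [hDdef]; ring
      have h1 := add_le_add hm1 hm2
      rw [hsum] at h1
      have h2 : D * Real.exp (-(lam / 2) * L)
          ≤ (D + Real.exp (c₃ / 3) + 1) * Real.exp (-(lam / 2) * L) := by
        apply mul_le_mul_of_nonneg_right ?_ (Real.exp_pos _).le
        linarith [Real.exp_pos (c₃ / 3)]
      linarith
    exact le_trans chain1 (ENNReal.ofReal_le_ofReal hfinal)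

end
end

section
/- (Green function bound.) Let U ⊂ ℝ^d be a bounded domain containing 0 with diameter diam U, let c̃', c' > 0 and κ ∈ (0,1), and let p_U : (0,∞) × Ū × Ū → [0,∞) be jointly measurable and satisfy: (i) p_U(t,x,y) ≤ c̃' t^{−d/2} exp(−c'|x−y|²/t) for all 0 < t ≤ 1 and x, y ∈ Ū; (ii) the Chapman–Kolmogorov relation p_U(s+t,x,y) = ∫_U p_U(s,x,z) p_U(t,z,y) dz for all s, t > 0; (iii) ∫_U p_U(1/2,v,z) dz ≤ 1 − κ for all v ∈ Ū. Let g(x) = ∫₀^∞ p_U(t,0,x) dt. Then there exist a constant c̃ depending only on c̃', c', d and a constant c depending only on c̃', c', d, κ, diam U such that for all x ∈ U with x ≠ 0: g(x) ≤ c̃ |x|^{2−d} + c if d ≥ 3; g(x) ≤ c̃ log(diam U / |x|) + c if d = 2; and g(x) ≤ c if d = 1. -/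
open MeasureTheory Filter Set
open scoped ENNReal

noncomputable section

/-- the Green function `g(x) = ∫_0^∞ p_U(t,0,x) dt` of a killed subtransition kernel,
as a Lebesgue integral. -/
def greenFn {d : ℕ} (p : ℝ → EucSp d → EucSp d → ℝ) (x : EucSp d) : ℝ≥0∞ :=
  ∫⁻ t in Set.Ioi (0:ℝ), ENNReal.ofReal (p t 0 x)

lemma my_lint_ofReal_eq {a b : ℝ} (hab : a ≤ b) {f : ℝ → ℝ}
    (hfi : IntervalIntegrable f volume a b) (hf : ∀ t ∈ Set.Ioc a b, 0 ≤ f t) :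
    ∫⁻ t in Set.Ioc a b, ENNReal.ofReal (f t) = ENNReal.ofReal (∫ t in a..b, f t) := by
  rw [intervalIntegral.integral_of_le hab]
  exact (MeasureTheory.ofReal_integral_eq_lintegral_ofReal hfi.1
    ((ae_restrict_iff' measurableSet_Ioc).2 (ae_of_all _ hf))).symm

lemma my_exp_neg_le {y : ℝ} (hy : 0 < y) (n : ℕ) :
    Real.exp (-y) ≤ (Nat.factorial n : ℝ) / y ^ n := by
  rw [Real.exp_neg]
  have h := Real.pow_div_factorial_le_exp (x := y) hy.le n
  have h2 : (0:ℝ) < y ^ n / (Nat.factorial n : ℝ) := by positivity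
  calc (Real.exp y)⁻¹ ≤ (y ^ n / (Nat.factorial n : ℝ))⁻¹ := inv_anti₀ h2 h
    _ = (Nat.factorial n : ℝ) / y ^ n := by rw [inv_div]

lemma my_lint_rpow_d3 {a β : ℝ} (ha : 0 < a) (hab : a ≤ 1) (hβ : β < -1) :
    ∫⁻ t in Set.Ioc a 1, ENNReal.ofReal (t ^ β) =
      ENNReal.ofReal ((1 - a ^ (β+1)) / (β+1)) := by
  have h0 : (0:ℝ) ∉ Set.uIcc a 1 := by
    rw [Set.uIcc_of_le hab]
    rintro ⟨h1, -⟩; linarith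
  rw [my_lint_ofReal_eq hab (intervalIntegral.intervalIntegrable_rpow (Or.inr h0))
      (fun t ht => (Real.rpow_pos_of_pos (ha.trans ht.1) β).le),
    integral_rpow (Or.inr ⟨by linarith, h0⟩)]
  rw [Real.one_rpow]

lemma my_lint_inv_Ioc {a : ℝ} (ha : 0 < a) (hab : a ≤ 1) :
    ∫⁻ t in Set.Ioc a 1, ENNReal.ofReal (t ^ (-1:ℝ)) = ENNReal.ofReal (-Real.log a) := by
  have h0 : (0:ℝ) ∉ Set.uIcc a 1 := by
    rw [Set.uIcc_of_le hab]
    rintro ⟨h1, -⟩; linarith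
  have hfi : IntervalIntegrable (fun t : ℝ => t ^ (-1:ℝ)) volume a 1 :=
    intervalIntegral.intervalIntegrable_rpow (Or.inr h0)
  rw [my_lint_ofReal_eq hab hfi (fun t ht => (Real.rpow_pos_of_pos (ha.trans ht.1) _).le)]
  congr 1
  have : ∀ t ∈ Set.uIcc a 1, t ^ (-1:ℝ) = t⁻¹ := by
    intro t ht; rw [Real.rpow_neg_one]
  rw [intervalIntegral.integral_congr this, integral_inv h0]
  rw [Real.log_div one_ne_zero (by linarith), Real.log_one]
  ring

lemma my_lint_rpow_half : ∫⁻ t in Set.Ioc (0:ℝ) 1, ENNReal.ofReal (t ^ (-(1:ℝ)/2)) =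
    ENNReal.ofReal 2 := by
  rw [my_lint_ofReal_eq zero_le_one (intervalIntegral.intervalIntegrable_rpow' (by norm_num))
      (fun t ht => (Real.rpow_pos_of_pos ht.1 _).le),
    integral_rpow (Or.inl (by norm_num))]
  norm_num

lemma my_gauss_piece1 {ct c' r t : ℝ} (d : ℕ) (hct : 0 < ct) (hc' : 0 < c')
    (hr : 0 < r) (ht : 0 < t) (htr : t ≤ r ^ 2) :
    ct * t ^ (-(d:ℝ)/2) * Real.exp (-(c' * r ^ 2) / t) ≤
      ct * (Nat.factorial d : ℝ) / c' ^ d * r ^ (-(d:ℝ)) := by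
  have hy : 0 < c' * r ^ 2 / t := by positivity
  have hexp : Real.exp (-(c' * r ^ 2) / t) ≤ (Nat.factorial d : ℝ) / (c' * r ^ 2 / t) ^ d := by
    rw [neg_div]
    exact my_exp_neg_le hy d
  have h1 : ct * t ^ (-(d:ℝ)/2) * Real.exp (-(c' * r ^ 2) / t)
      ≤ ct * t ^ (-(d:ℝ)/2) * ((Nat.factorial d : ℝ) / (c' * r ^ 2 / t) ^ d) := by
    have hpos : (0:ℝ) < ct * t ^ (-(d:ℝ)/2) := by positivity
    exact mul_le_mul_of_nonneg_left hexp hpos.le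
  refine h1.trans ?_
  have hyd : (c' * r ^ 2 / t) ^ d = c' ^ d * (r ^ 2) ^ d / t ^ d := by
    rw [div_pow, mul_pow]
  rw [hyd]
  have e1 : t ^ (-(d:ℝ)/2) * (t:ℝ) ^ d = t ^ ((d:ℝ)/2) := by
    rw [← Real.rpow_natCast t d, ← Real.rpow_add ht]
    congr 1; ring
  have e2 : (r:ℝ) ^ (-(d:ℝ)) * (r ^ 2) ^ d = r ^ ((d:ℝ)) := by
    rw [← Real.rpow_natCast (r ^ 2) d, ← Real.rpow_natCast r 2, ← Real.rpow_mul hr.le,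
      ← Real.rpow_add hr]
    congr 1; push_cast; ring
  have e4 : (r ^ 2) ^ ((d:ℝ)/2) = r ^ ((d:ℝ)) := by
    rw [← Real.rpow_natCast r 2, ← Real.rpow_mul hr.le]
    congr 1; push_cast; ring
  have e3 : t ^ ((d:ℝ)/2) ≤ (r ^ 2) ^ ((d:ℝ)/2) :=
    Real.rpow_le_rpow ht.le htr (by positivity)
  have key : t ^ (-(d:ℝ)/2) * (t:ℝ) ^ d ≤ r ^ (-(d:ℝ)) * (r ^ 2) ^ d := by
    rw [e1, e2]
    exact e3.trans_eq e4
  have hrd : (0:ℝ) < (r ^ 2) ^ d := by positivity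
  calc ct * t ^ (-(d:ℝ)/2) * ((Nat.factorial d : ℝ) / (c' ^ d * (r ^ 2) ^ d / t ^ d))
      = ct * (Nat.factorial d : ℝ) / c' ^ d * ((t ^ (-(d:ℝ)/2) * (t:ℝ) ^ d) / (r ^ 2) ^ d) := by
        field_simp
    _ ≤ ct * (Nat.factorial d : ℝ) / c' ^ d * ((r ^ (-(d:ℝ)) * (r ^ 2) ^ d) / (r ^ 2) ^ d) := by
        gcongr
    _ = ct * (Nat.factorial d : ℝ) / c' ^ d * r ^ (-(d:ℝ)) := by
        rw [mul_div_assoc, mul_div_cancel_right₀ _ hrd.ne']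

lemma my_ofReal_setIntegral_le {α : Type*} [MeasurableSpace α] {μ : Measure α} {s : Set α}
    {f : α → ℝ} (hf : Measurable f) (h0 : ∀ x, 0 ≤ f x) :
    ENNReal.ofReal (∫ x in s, f x ∂μ) ≤ ∫⁻ x in s, ENNReal.ofReal (f x) ∂μ := by
  rw [integral_eq_lintegral_of_nonneg_ae (ae_of_all _ h0) hf.aestronglyMeasurable]
  exact ENNReal.ofReal_toReal_le

set_option maxHeartbeats 2000000 in
theorem green_function_bound (d : ℕ) (hd : 1 ≤ d) (ct c' : ℝ) (hct : 0 < ct) (hc' : 0 < c') :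
    ∃ ctil > (0:ℝ), ∀ κ : ℝ, 0 < κ → κ < 1 → ∀ D : ℝ, ∃ c > (0:ℝ),
      ∀ U : Set (EucSp d), IsOpen U → IsConnected U → Bornology.IsBounded U →
        (0 : EucSp d) ∈ U → Metric.diam U = D →
        ∀ p : ℝ → EucSp d → EucSp d → ℝ,
          Measurable (fun q : ℝ × EucSp d × EucSp d => p q.1 q.2.1 q.2.2) →
          (∀ t x y, 0 ≤ p t x y) →
          -- (i) Gaussian upper bound for small times
          (∀ t : ℝ, 0 < t → t ≤ 1 → ∀ x ∈ closure U, ∀ y ∈ closure U,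
            p t x y ≤ ct * t ^ (-(d : ℝ) / 2) * Real.exp (-(c' * ‖x - y‖ ^ 2) / t)) →
          -- (ii) Chapman–Kolmogorov relation
          (∀ s t : ℝ, 0 < s → 0 < t → ∀ x ∈ closure U, ∀ y ∈ closure U,
            p (s + t) x y = ∫ z in U, p s x z * p t z y) →
          -- (iii) uniform killing
          (∀ v ∈ closure U, ∫ z in U, p (1 / 2) v z ≤ 1 - κ) →
          ∀ x ∈ U, x ≠ 0 →
            (3 ≤ d →
              greenFn p x ≤ ENNReal.ofReal (ctil * ‖x‖ ^ ((2 : ℝ) - d) + c)) ∧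
            (d = 2 →
              greenFn p x ≤ ENNReal.ofReal (ctil * Real.log (Metric.diam U / ‖x‖) + c)) ∧
            (d = 1 → greenFn p x ≤ ENNReal.ofReal c) := by
  set C₁ : ℝ := ct * (Nat.factorial d : ℝ) / c' ^ d with hC₁
  have hC₁pos : 0 < C₁ := by positivity
  refine ⟨2 * ct + C₁ + 1, by positivity, ?_⟩
  set ctil : ℝ := 2 * ct + C₁ + 1 with hctil
  intro κ hκ0 hκ1 D
  set A₀ : ℝ := ct * (2:ℝ) ^ ((d:ℝ)/2) with hA₀def
  have hA₀pos : 0 < A₀ := by positivity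
  set TB : ℝ≥0∞ := ENNReal.ofReal A₀ *
      (ENNReal.ofReal A₀ * volume (Metric.closedBall (0:EucSp d) D)) *
      (ENNReal.ofReal κ)⁻¹ with hTBdef
  have hTBne : TB ≠ ⊤ := by
    apply ENNReal.mul_ne_top
    · exact ENNReal.mul_ne_top ENNReal.ofReal_ne_top
        (ENNReal.mul_ne_top ENNReal.ofReal_ne_top measure_closedBall_lt_top.ne)
    · exact ENNReal.inv_ne_top.2 (ENNReal.ofReal_pos.2 hκ0).ne'
  set Ltail : ℝ := TB.toReal with hLtail
  have hLtail0 : 0 ≤ Ltail := ENNReal.toReal_nonneg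
  refine ⟨C₁ + C₁ + 2 * ct * |Real.log D| + 2 * ct + Ltail + 1, by positivity, ?_⟩
  set c : ℝ := C₁ + C₁ + 2 * ct * |Real.log D| + 2 * ct + Ltail + 1 with hcdef
  intro U hUopen hUconn hUb hU0 hdiam p hm hpnn hGauss hCK hkill x hx hx0
  have hUmeas : MeasurableSet U := hUopen.measurableSet
  haveI : Fact (volume U < ⊤) := ⟨hUb.measure_lt_top⟩
  have hUball : U ⊆ Metric.closedBall (0:EucSp d) D := by
    intro y hy
    rw [Metric.mem_closedBall]
    exact hdiam ▸ Metric.dist_le_diam_of_mem hUb hy hU0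
  set r : ℝ := ‖x‖ with hrdef
  have hr : 0 < r := norm_pos_iff.2 hx0
  have hrD : r ≤ D := by
    have h := Metric.dist_le_diam_of_mem hUb hx hU0
    rwa [dist_zero_right, hdiam] at h
  have hD0 : 0 < D := hr.trans_le hrD
  have hxcl : x ∈ closure U := subset_closure hx
  have h0cl : (0:EucSp d) ∈ closure U := subset_closure hU0
  -- measurability helpers
  have mp1 : Measurable fun t => p t 0 x := by
    have h : Measurable fun t : ℝ => (t, ((0:EucSp d), x)) :=
      measurable_id.prodMk measurable_const
    exact hm.comp h
  have mp2 : ∀ s : ℝ, ∀ y : EucSp d, Measurable fun z => p s y z := fun s y =>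
    hm.comp (measurable_const.prodMk (measurable_const.prodMk measurable_id))
  have mp3 : ∀ s h : ℝ, Measurable fun zw : EucSp d × EucSp d =>
      ENNReal.ofReal (p s 0 zw.2) * ENNReal.ofReal (p h zw.2 zw.1) := fun s h =>
    ((hm.comp (measurable_const.prodMk (measurable_const.prodMk measurable_snd))).ennreal_ofReal).mul
      ((hm.comp (measurable_const.prodMk (measurable_snd.prodMk measurable_fst))).ennreal_ofReal)
  -- bound at time 1/2
  have hhalf : ∀ y ∈ closure U, ∀ z ∈ closure U, p (1/2) y z ≤ A₀ := by
    intro y hy z hz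
    have h := hGauss (1/2) (by norm_num) (by norm_num) y hy z hz
    have hhalfpow : ((1:ℝ)/2) ^ (-(d:ℝ)/2) = (2:ℝ) ^ ((d:ℝ)/2) := by
      rw [one_div, Real.inv_rpow (by norm_num : (0:ℝ) ≤ 2),
        ← Real.rpow_neg (by norm_num : (0:ℝ) ≤ 2)]
      congr 1; ring
    have hexp1 : Real.exp (-(c' * ‖y - z‖ ^ 2) / (1/2)) ≤ 1 := by
      rw [Real.exp_le_one_iff]
      have : (0:ℝ) ≤ c' * ‖y - z‖ ^ 2 := by positivity
      rw [neg_div]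
      simpa using div_nonneg this (by norm_num : (0:ℝ) ≤ 1/2)
    calc p (1/2) y z ≤ ct * ((1:ℝ)/2) ^ (-(d:ℝ)/2) * Real.exp (-(c' * ‖y - z‖ ^ 2) / (1/2)) := h
      _ ≤ ct * ((1:ℝ)/2) ^ (-(d:ℝ)/2) * 1 := by
          apply mul_le_mul_of_nonneg_left hexp1
          positivity
      _ = A₀ := by rw [mul_one, hhalfpow]
  -- killing in ENNReal form
  have hkillE : ∀ w ∈ closure U,
      (∫⁻ z in U, ENNReal.ofReal (p (1/2) w z)) ≤ ENNReal.ofReal (1 - κ) := by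
    intro w hw
    have hint : IntegrableOn (fun z => p (1/2) w z) U := by
      refine Integrable.mono' (integrable_const A₀) (mp2 _ _).aestronglyMeasurable ?_
      refine (ae_restrict_iff' hUmeas).2 (ae_of_all _ fun z hz => ?_)
      rw [Real.norm_eq_abs, abs_of_nonneg (hpnn _ _ _)]
      exact hhalf w hw z (subset_closure hz)
    rw [← ofReal_integral_eq_lintegral_ofReal hint
      ((ae_restrict_iff' hUmeas).2 (ae_of_all _ fun z _ => hpnn _ _ _))]
    exact ENNReal.ofReal_le_ofReal (hkill w hw)
  -- Chapman-Kolmogorov in ENNReal form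
  have hCKE : ∀ s : ℝ, 0 < s → ∀ z ∈ closure U,
      ENNReal.ofReal (p (s + 1/2) 0 z) ≤
        ∫⁻ w in U, ENNReal.ofReal (p s 0 w) * ENNReal.ofReal (p (1/2) w z) := by
    intro s hs z hz
    rw [hCK s (1/2) hs (by norm_num) 0 h0cl z hz]
    have hmeas : Measurable fun w => p s 0 w * p (1/2) w z :=
      (mp2 s 0).mul (hm.comp (measurable_const.prodMk (measurable_id.prodMk measurable_const)))
    calc ENNReal.ofReal (∫ w in U, p s 0 w * p (1/2) w z)
        ≤ ∫⁻ w in U, ENNReal.ofReal (p s 0 w * p (1/2) w z) :=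
          my_ofReal_setIntegral_le hmeas (fun w => mul_nonneg (hpnn _ _ _) (hpnn _ _ _))
      _ = ∫⁻ w in U, ENNReal.ofReal (p s 0 w) * ENNReal.ofReal (p (1/2) w z) :=
          lintegral_congr fun w => ENNReal.ofReal_mul (hpnn _ _ _)
  -- the mass function and its decay
  set Mt : ℝ → ℝ≥0∞ := fun s => ∫⁻ z in U, ENNReal.ofReal (p s 0 z) with hMtdef
  set K : ℝ≥0∞ := ENNReal.ofReal A₀ * volume U with hKdef
  set q : ℝ≥0∞ := ENNReal.ofReal (1 - κ) with hqdef
  have hqne : q ≠ ⊤ := ENNReal.ofReal_ne_top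
  have hMt : ∀ n : ℕ, ∀ s ∈ Set.Ico (1/2 + (n:ℝ)/2) (1 + (n:ℝ)/2), Mt s ≤ K * q ^ n := by
    intro n
    induction n with
    | zero =>
      intro s hs
      simp only [Nat.cast_zero, zero_div, add_zero] at hs
      have hs0 : 0 < s := by linarith [hs.1]
      have hs1 : s ≤ 1 := hs.2.le
      have hb : ∀ z ∈ U, ENNReal.ofReal (p s 0 z) ≤ ENNReal.ofReal A₀ := by
        intro z hz
        apply ENNReal.ofReal_le_ofReal
        have h := hGauss s hs0 hs1 0 h0cl z (subset_closure hz)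
        have hpow : s ^ (-(d:ℝ)/2) ≤ ((1:ℝ)/2) ^ (-(d:ℝ)/2) :=
          Real.rpow_le_rpow_of_nonpos (by norm_num) hs.1 (by rw [neg_div]; exact neg_nonpos.2 (by positivity))
        have hexp1 : Real.exp (-(c' * ‖(0:EucSp d) - z‖ ^ 2) / s) ≤ 1 := by
          rw [Real.exp_le_one_iff, neg_div]
          have : (0:ℝ) ≤ c' * ‖(0:EucSp d) - z‖ ^ 2 := by positivity
          simpa using div_nonneg this hs0.le
        have hhalfpow : ((1:ℝ)/2) ^ (-(d:ℝ)/2) = (2:ℝ) ^ ((d:ℝ)/2) := by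
          rw [one_div, Real.inv_rpow (by norm_num : (0:ℝ) ≤ 2),
            ← Real.rpow_neg (by norm_num : (0:ℝ) ≤ 2)]
          congr 1; ring
        calc p s 0 z ≤ ct * s ^ (-(d:ℝ)/2) * Real.exp (-(c' * ‖(0:EucSp d) - z‖ ^ 2) / s) := h
          _ ≤ ct * s ^ (-(d:ℝ)/2) * 1 := by
              apply mul_le_mul_of_nonneg_left hexp1; positivity
          _ = ct * s ^ (-(d:ℝ)/2) := mul_one _
          _ ≤ ct * ((1:ℝ)/2) ^ (-(d:ℝ)/2) := mul_le_mul_of_nonneg_left hpow hct.le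
          _ = A₀ := by rw [hhalfpow]
      calc Mt s ≤ ∫⁻ _ in U, ENNReal.ofReal A₀ := setLIntegral_mono' hUmeas hb
        _ = ENNReal.ofReal A₀ * volume U := setLIntegral_const _ _
        _ = K * q ^ 0 := by rw [pow_zero, mul_one]
    | succ n ih =>
      intro s hs
      have hn : (0:ℝ) ≤ (n:ℝ) := Nat.cast_nonneg n
      have hcast : ((n+1 : ℕ):ℝ) = (n:ℝ) + 1 := by push_cast; ring
      rw [hcast] at hs
      have hs' : s - 1/2 ∈ Set.Ico (1/2 + (n:ℝ)/2) (1 + (n:ℝ)/2) :=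
        ⟨by linarith [hs.1], by linarith [hs.2]⟩
      have hspos : 0 < s - 1/2 := by linarith [hs.1]
      have heq : s = (s - 1/2) + 1/2 := by ring
      have step1 : Mt s ≤ ∫⁻ z in U, ∫⁻ w in U,
          ENNReal.ofReal (p (s - 1/2) 0 w) * ENNReal.ofReal (p (1/2) w z) := by
        apply setLIntegral_mono' hUmeas
        intro z hz
        calc ENNReal.ofReal (p s 0 z)
            = ENNReal.ofReal (p ((s - 1/2) + 1/2) 0 z) := by rw [← heq]
          _ ≤ _ := hCKE (s - 1/2) hspos z (subset_closure hz)
      have hswap : (∫⁻ z in U, ∫⁻ w in U,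
            ENNReal.ofReal (p (s - 1/2) 0 w) * ENNReal.ofReal (p (1/2) w z))
          = ∫⁻ w in U, ∫⁻ z in U,
            ENNReal.ofReal (p (s - 1/2) 0 w) * ENNReal.ofReal (p (1/2) w z) :=
        lintegral_lintegral_swap (mp3 (s - 1/2) (1/2)).aemeasurable
      have step2 : (∫⁻ w in U, ∫⁻ z in U,
            ENNReal.ofReal (p (s - 1/2) 0 w) * ENNReal.ofReal (p (1/2) w z))
          ≤ ∫⁻ w in U, ENNReal.ofReal (p (s - 1/2) 0 w) * q := by
        apply setLIntegral_mono' hUmeas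
        intro w hw
        rw [lintegral_const_mul' _ _ ENNReal.ofReal_ne_top]
        exact mul_le_mul_right (hkillE w (subset_closure hw)) _
      calc Mt s ≤ _ := step1
        _ = _ := hswap
        _ ≤ _ := step2
        _ = Mt (s - 1/2) * q := lintegral_mul_const' q _ hqne
        _ ≤ (K * q ^ n) * q := mul_le_mul_left (ih _ hs') _
        _ = K * q ^ (n + 1) := by rw [mul_assoc, ← pow_succ]
  -- pointwise tail bound
  have htail : ∀ n : ℕ, ∀ t ∈ Set.Ico (1 + (n:ℝ)/2) (3/2 + (n:ℝ)/2),
      ENNReal.ofReal (p t 0 x) ≤ (K * q ^ n) * ENNReal.ofReal A₀ := by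
    intro n t ht
    have hn : (0:ℝ) ≤ (n:ℝ) := Nat.cast_nonneg n
    have htm : t - 1/2 ∈ Set.Ico (1/2 + (n:ℝ)/2) (1 + (n:ℝ)/2) :=
      ⟨by linarith [ht.1], by linarith [ht.2]⟩
    have hpos : 0 < t - 1/2 := by linarith [ht.1]
    have heq : t = (t - 1/2) + 1/2 := by ring
    calc ENNReal.ofReal (p t 0 x) = ENNReal.ofReal (p ((t - 1/2) + 1/2) 0 x) := by rw [← heq]
      _ ≤ ∫⁻ w in U, ENNReal.ofReal (p (t - 1/2) 0 w) * ENNReal.ofReal (p (1/2) w x) :=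
          hCKE _ hpos x hxcl
      _ ≤ ∫⁻ w in U, ENNReal.ofReal (p (t - 1/2) 0 w) * ENNReal.ofReal A₀ :=
          setLIntegral_mono' hUmeas fun w hw =>
            mul_le_mul_right (ENNReal.ofReal_le_ofReal (hhalf w (subset_closure hw) x hxcl)) _
      _ = Mt (t - 1/2) * ENNReal.ofReal A₀ := lintegral_mul_const' _ _ ENNReal.ofReal_ne_top
      _ ≤ (K * q ^ n) * ENNReal.ofReal A₀ := mul_le_mul_left (hMt n _ htm) _
  -- tail integral bound
  have hTail : (∫⁻ t in Set.Ioi (1:ℝ), ENNReal.ofReal (p t 0 x)) ≤ TB := by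
    have hcover : Set.Ioi (1:ℝ) ⊆ ⋃ n : ℕ, Set.Ico (1 + (n:ℝ)/2) (3/2 + (n:ℝ)/2) := by
      intro t ht
      have ht1 : (1:ℝ) < t := ht
      simp only [Set.mem_iUnion, Set.mem_Ico]
      refine ⟨⌊2*t - 2⌋₊, ?_, ?_⟩
      · have h1 : (⌊2*t-2⌋₊ : ℝ) ≤ 2*t - 2 := Nat.floor_le (by linarith)
        linarith
      · have h2 : 2*t - 2 < (⌊2*t-2⌋₊ : ℝ) + 1 := Nat.lt_floor_add_one _
        linarith
    have hq1 : q < 1 := by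
      rw [hqdef, ← ENNReal.ofReal_one]
      exact ENNReal.ofReal_lt_ofReal_iff_of_nonneg (by linarith) |>.2 (by linarith)
    have hqinv : (1 - q)⁻¹ = (ENNReal.ofReal κ)⁻¹ := by
      congr 1
      rw [hqdef, ← ENNReal.ofReal_one, ← ENNReal.ofReal_sub _ (by linarith : (0:ℝ) ≤ 1 - κ)]
      norm_num
    calc (∫⁻ t in Set.Ioi (1:ℝ), ENNReal.ofReal (p t 0 x))
        ≤ ∫⁻ t in ⋃ n : ℕ, Set.Ico (1 + (n:ℝ)/2) (3/2 + (n:ℝ)/2),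
            ENNReal.ofReal (p t 0 x) := lintegral_mono_set hcover
      _ ≤ ∑' n : ℕ, ∫⁻ t in Set.Ico (1 + (n:ℝ)/2) (3/2 + (n:ℝ)/2),
            ENNReal.ofReal (p t 0 x) := lintegral_iUnion_le _ _
      _ ≤ ∑' n : ℕ, (K * q ^ n) * ENNReal.ofReal A₀ := by
          apply ENNReal.tsum_le_tsum
          intro n
          calc (∫⁻ t in Set.Ico (1 + (n:ℝ)/2) (3/2 + (n:ℝ)/2), ENNReal.ofReal (p t 0 x))
              ≤ ∫⁻ _ in Set.Ico (1 + (n:ℝ)/2) (3/2 + (n:ℝ)/2),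
                  (K * q ^ n) * ENNReal.ofReal A₀ :=
                setLIntegral_mono' measurableSet_Ico (htail n)
            _ = (K * q ^ n) * ENNReal.ofReal A₀ *
                  volume (Set.Ico (1 + (n:ℝ)/2) (3/2 + (n:ℝ)/2)) := setLIntegral_const _ _
            _ ≤ (K * q ^ n) * ENNReal.ofReal A₀ * 1 := by
                apply mul_le_mul_right
                rw [Real.volume_Ico]
                apply ENNReal.ofReal_le_one.2
                norm_num
            _ = (K * q ^ n) * ENNReal.ofReal A₀ := mul_one _
      _ = (K * ENNReal.ofReal A₀) * ∑' n : ℕ, q ^ n := by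
          rw [ENNReal.tsum_mul_left.symm]
          · congr 1
            ext n
            ring
      _ = (K * ENNReal.ofReal A₀) * (ENNReal.ofReal κ)⁻¹ := by
          rw [ENNReal.tsum_geometric, hqinv]
      _ ≤ TB := by
          rw [hTBdef, hKdef]
          apply mul_le_mul_left
          calc ENNReal.ofReal A₀ * volume U * ENNReal.ofReal A₀
              = ENNReal.ofReal A₀ * (ENNReal.ofReal A₀ * volume U) := by ring
            _ ≤ ENNReal.ofReal A₀ *
                (ENNReal.ofReal A₀ * volume (Metric.closedBall (0:EucSp d) D)) := by
                apply mul_le_mul_right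
                exact mul_le_mul_right (measure_mono hUball) _
  have hTail' : (∫⁻ t in Set.Ioi (1:ℝ), ENNReal.ofReal (p t 0 x)) ≤ ENNReal.ofReal Ltail := by
    rw [hLtail, ENNReal.ofReal_toReal hTBne]
    exact hTail
  -- splitting the Green function
  have hsplit : greenFn p x = (∫⁻ t in Set.Ioc (0:ℝ) 1, ENNReal.ofReal (p t 0 x)) +
      ∫⁻ t in Set.Ioi (1:ℝ), ENNReal.ofReal (p t 0 x) := by
    rw [greenFn, ← Set.Ioc_union_Ioi_eq_Ioi (zero_le_one),
      lintegral_union measurableSet_Ioi Set.Ioc_disjoint_Ioi_same]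
  -- small time: Gaussian bound
  have hnorm0 : ‖(0:EucSp d) - x‖ = r := by rw [zero_sub, norm_neg]
  have hSmall : (∫⁻ t in Set.Ioc (0:ℝ) 1, ENNReal.ofReal (p t 0 x)) ≤
      ∫⁻ t in Set.Ioc (0:ℝ) 1,
        ENNReal.ofReal (ct * t ^ (-(d:ℝ)/2) * Real.exp (-(c' * r ^ 2) / t)) := by
    apply setLIntegral_mono' measurableSet_Ioc
    intro t ht
    apply ENNReal.ofReal_le_ofReal
    have h := hGauss t ht.1 ht.2 0 h0cl x hxcl
    rwa [hnorm0] at h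
  have hr2 : (0:ℝ) < r ^ 2 := by positivity
  -- small time bound, case r > 1
  have key1 : 1 < r → (∫⁻ t in Set.Ioc (0:ℝ) 1, ENNReal.ofReal (p t 0 x)) ≤
      ENNReal.ofReal C₁ := by
    intro hr1
    refine hSmall.trans ?_
    have hb : ∀ t ∈ Set.Ioc (0:ℝ) 1,
        ENNReal.ofReal (ct * t ^ (-(d:ℝ)/2) * Real.exp (-(c' * r ^ 2) / t)) ≤
          ENNReal.ofReal C₁ := by
      intro t ht
      apply ENNReal.ofReal_le_ofReal
      have h1 : t ≤ r ^ 2 := ht.2.trans (by nlinarith)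
      calc ct * t ^ (-(d:ℝ)/2) * Real.exp (-(c' * r ^ 2) / t)
          ≤ C₁ * r ^ (-(d:ℝ)) := my_gauss_piece1 d hct hc' hr ht.1 h1
        _ ≤ C₁ * 1 := by
            apply mul_le_mul_of_nonneg_left _ hC₁pos.le
            exact Real.rpow_le_one_of_one_le_of_nonpos hr1.le (neg_nonpos.2 (Nat.cast_nonneg d))
        _ = C₁ := mul_one _
    calc (∫⁻ t in Set.Ioc (0:ℝ) 1,
          ENNReal.ofReal (ct * t ^ (-(d:ℝ)/2) * Real.exp (-(c' * r ^ 2) / t)))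
        ≤ ∫⁻ _ in Set.Ioc (0:ℝ) 1, ENNReal.ofReal C₁ := setLIntegral_mono' measurableSet_Ioc hb
      _ = ENNReal.ofReal C₁ * volume (Set.Ioc (0:ℝ) 1) := setLIntegral_const _ _
      _ = ENNReal.ofReal C₁ := by
          rw [Real.volume_Ioc]
          norm_num
  -- small time bound, case r ≤ 1: split at r^2
  have key2 : r ≤ 1 → (∫⁻ t in Set.Ioc (0:ℝ) 1, ENNReal.ofReal (p t 0 x)) ≤
      ENNReal.ofReal (C₁ * r ^ ((2:ℝ) - d)) +
        ∫⁻ t in Set.Ioc (r^2) 1, ENNReal.ofReal (ct * t ^ (-(d:ℝ)/2)) := by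
    intro hr1
    have hr21 : r ^ 2 ≤ 1 := by nlinarith
    refine hSmall.trans ?_
    rw [← Set.Ioc_union_Ioc_eq_Ioc hr2.le hr21,
      lintegral_union measurableSet_Ioc (Set.Ioc_disjoint_Ioc_of_le le_rfl)]
    apply add_le_add
    · -- piece on (0, r^2]
      have hb : ∀ t ∈ Set.Ioc (0:ℝ) (r^2),
          ENNReal.ofReal (ct * t ^ (-(d:ℝ)/2) * Real.exp (-(c' * r ^ 2) / t)) ≤
            ENNReal.ofReal (C₁ * r ^ (-(d:ℝ))) := fun t ht =>
        ENNReal.ofReal_le_ofReal (my_gauss_piece1 d hct hc' hr ht.1 ht.2)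
      calc (∫⁻ t in Set.Ioc (0:ℝ) (r^2),
            ENNReal.ofReal (ct * t ^ (-(d:ℝ)/2) * Real.exp (-(c' * r ^ 2) / t)))
          ≤ ∫⁻ _ in Set.Ioc (0:ℝ) (r^2), ENNReal.ofReal (C₁ * r ^ (-(d:ℝ))) :=
            setLIntegral_mono' measurableSet_Ioc hb
        _ = ENNReal.ofReal (C₁ * r ^ (-(d:ℝ))) * volume (Set.Ioc (0:ℝ) (r^2)) :=
            setLIntegral_const _ _
        _ = ENNReal.ofReal (C₁ * r ^ (-(d:ℝ)) * r ^ 2) := by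
            rw [Real.volume_Ioc, sub_zero, ← ENNReal.ofReal_mul (by positivity)]
        _ = ENNReal.ofReal (C₁ * r ^ ((2:ℝ) - d)) := by
            congr 1
            rw [mul_assoc, ← Real.rpow_natCast r 2, ← Real.rpow_add hr]
            congr 2
            push_cast; ring
    · -- piece on (r^2, 1]
      apply setLIntegral_mono' measurableSet_Ioc
      intro t ht
      apply ENNReal.ofReal_le_ofReal
      have hexp1 : Real.exp (-(c' * r ^ 2) / t) ≤ 1 := by
        rw [Real.exp_le_one_iff, neg_div]
        have h2 : (0:ℝ) ≤ c' * r ^ 2 := by positivity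
        simpa using div_nonneg h2 (hr2.trans ht.1).le
      calc ct * t ^ (-(d:ℝ)/2) * Real.exp (-(c' * r ^ 2) / t)
          ≤ ct * t ^ (-(d:ℝ)/2) * 1 := by
            apply mul_le_mul_of_nonneg_left hexp1
            have := hr2.trans ht.1
            positivity
        _ = ct * t ^ (-(d:ℝ)/2) := mul_one _
  -- pull out constant from the remaining integral
  have hpull : (∫⁻ t in Set.Ioc (r^2) 1, ENNReal.ofReal (ct * t ^ (-(d:ℝ)/2)))
      = ENNReal.ofReal ct * ∫⁻ t in Set.Ioc (r^2) 1, ENNReal.ofReal (t ^ (-(d:ℝ)/2)) := by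
    rw [← lintegral_const_mul' _ _ ENNReal.ofReal_ne_top]
    exact lintegral_congr fun t => ENNReal.ofReal_mul hct.le
  have hcl : (0:ℝ) ≤ 2 * ct * |Real.log D| := by positivity
  refine ⟨?_, ?_, ?_⟩
  · -- d ≥ 3
    intro hd3
    have hd3' : (3:ℝ) ≤ (d:ℝ) := by exact_mod_cast hd3
    rcases le_or_gt r 1 with hr1 | hr1
    · have hr21 : r ^ 2 ≤ 1 := by nlinarith
      have hβ : -(d:ℝ)/2 < -1 := by linarith
      have hseg : (∫⁻ t in Set.Ioc (r^2) 1, ENNReal.ofReal (ct * t ^ (-(d:ℝ)/2)))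
          ≤ ENNReal.ofReal (ct * (2 * r ^ ((2:ℝ) - d))) := by
        rw [hpull, my_lint_rpow_d3 hr2 hr21 hβ, ← ENNReal.ofReal_mul hct.le]
        apply ENNReal.ofReal_le_ofReal
        have hρ : (r^2) ^ (-(d:ℝ)/2 + 1) = r ^ ((2:ℝ) - d) := by
          rw [← Real.rpow_natCast r 2, ← Real.rpow_mul hr.le]
          congr 1; push_cast; ring
        rw [hρ]
        have hρ1 : (1:ℝ) ≤ r ^ ((2:ℝ) - d) := by
          have h := Real.rpow_le_rpow_of_nonpos hr hr1 (show (2:ℝ) - d ≤ 0 by linarith)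
          rwa [Real.one_rpow] at h
        have hden : -(d:ℝ)/2 + 1 ≤ -(1:ℝ)/2 := by linarith
        have hden0 : -(d:ℝ)/2 + 1 < 0 := by linarith
        apply mul_le_mul_of_nonneg_left _ hct.le
        rw [div_le_iff_of_neg hden0]
        nlinarith
      calc greenFn p x = _ := hsplit
        _ ≤ (ENNReal.ofReal (C₁ * r ^ ((2:ℝ) - d)) + ENNReal.ofReal (ct * (2 * r ^ ((2:ℝ) - d))))
            + ENNReal.ofReal Ltail := add_le_add ((key2 hr1).trans (add_le_add_right hseg _)) hTail'
        _ = ENNReal.ofReal (C₁ * r ^ ((2:ℝ) - d) + ct * (2 * r ^ ((2:ℝ) - d)) + Ltail) := by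
            rw [← ENNReal.ofReal_add (by positivity) (by positivity),
              ← ENNReal.ofReal_add (by positivity) hLtail0]
        _ ≤ ENNReal.ofReal (ctil * r ^ ((2:ℝ) - d) + c) := by
            apply ENNReal.ofReal_le_ofReal
            have h1 : (0:ℝ) < r ^ ((2:ℝ) - d) := Real.rpow_pos_of_pos hr _
            have habs : 0 ≤ |Real.log D| := abs_nonneg _
            rw [hctil, hcdef]
            nlinarith
    · calc greenFn p x = _ := hsplit
        _ ≤ ENNReal.ofReal C₁ + ENNReal.ofReal Ltail := add_le_add (key1 hr1) hTail'
        _ = ENNReal.ofReal (C₁ + Ltail) := by rw [← ENNReal.ofReal_add hC₁pos.le hLtail0]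
        _ ≤ ENNReal.ofReal (ctil * r ^ ((2:ℝ) - d) + c) := by
            apply ENNReal.ofReal_le_ofReal
            have h1 : (0:ℝ) < r ^ ((2:ℝ) - d) := Real.rpow_pos_of_pos hr _
            have habs : 0 ≤ |Real.log D| := abs_nonneg _
            have hctil0 : 0 < ctil := by rw [hctil]; positivity
            rw [hcdef]
            nlinarith
  · -- d = 2
    intro hd2
    subst hd2
    rw [hdiam]
    have hlogDr : 0 ≤ Real.log (D / r) := Real.log_nonneg ((one_le_div hr).2 hrD)
    rcases le_or_gt r 1 with hr1 | hr1
    · have hr21 : r ^ 2 ≤ 1 := by nlinarith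
      have hseg : (∫⁻ t in Set.Ioc (r^2) 1, ENNReal.ofReal (ct * t ^ (-((2:ℕ):ℝ)/2)))
          ≤ ENNReal.ofReal (2 * ct * Real.log (D / r) + 2 * ct * |Real.log D|) := by
        have hexp : -(((2:ℕ)):ℝ)/2 = (-1:ℝ) := by norm_num
        rw [hpull, hexp, my_lint_inv_Ioc hr2 hr21, ← ENNReal.ofReal_mul hct.le]
        apply ENNReal.ofReal_le_ofReal
        have hlog2 : Real.log (r ^ 2) = 2 * Real.log r := by
          have h := Real.log_pow r 2
          push_cast at h
          exact h
        have hlogdiv : Real.log (D / r) = Real.log D - Real.log r :=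
          Real.log_div hD0.ne' hr.ne'
        have habs : -|Real.log D| ≤ Real.log D := neg_abs_le _
        nlinarith [hct.le]
      calc greenFn p x = _ := hsplit
        _ ≤ (ENNReal.ofReal (C₁ * r ^ ((2:ℝ) - (2:ℕ))) +
              ENNReal.ofReal (2 * ct * Real.log (D / r) + 2 * ct * |Real.log D|))
            + ENNReal.ofReal Ltail :=
            add_le_add ((key2 hr1).trans (add_le_add_right hseg _)) hTail'
        _ = ENNReal.ofReal ((C₁ * r ^ ((2:ℝ) - (2:ℕ)) +
              (2 * ct * Real.log (D / r) + 2 * ct * |Real.log D|)) + Ltail) := by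
            rw [← ENNReal.ofReal_add (by positivity) (by positivity),
              ← ENNReal.ofReal_add (by positivity) hLtail0]
        _ ≤ ENNReal.ofReal (ctil * Real.log (D / r) + c) := by
            apply ENNReal.ofReal_le_ofReal
            have hr0 : r ^ ((2:ℝ) - (2:ℕ)) = 1 := by
              norm_num
            rw [hr0, hctil, hcdef]
            nlinarith [mul_nonneg (by positivity : (0:ℝ) ≤ C₁ + 1) hlogDr]
    · calc greenFn p x = _ := hsplit
        _ ≤ ENNReal.ofReal C₁ + ENNReal.ofReal Ltail := add_le_add (key1 hr1) hTail'
        _ = ENNReal.ofReal (C₁ + Ltail) := by rw [← ENNReal.ofReal_add hC₁pos.le hLtail0]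
        _ ≤ ENNReal.ofReal (ctil * Real.log (D / r) + c) := by
            apply ENNReal.ofReal_le_ofReal
            have hctil0 : 0 < ctil := by rw [hctil]; positivity
            rw [hcdef]
            nlinarith [mul_nonneg hctil0.le hlogDr]
  · -- d = 1
    intro hd1
    subst hd1
    have hSb : (∫⁻ t in Set.Ioc (0:ℝ) 1, ENNReal.ofReal (p t 0 x)) ≤
        ENNReal.ofReal (ct * 2) := by
      refine hSmall.trans ?_
      have hb : ∀ t ∈ Set.Ioc (0:ℝ) 1,
          ENNReal.ofReal (ct * t ^ (-((1:ℕ):ℝ)/2) * Real.exp (-(c' * r ^ 2) / t)) ≤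
            ENNReal.ofReal (ct * t ^ (-(1:ℝ)/2)) := by
        intro t ht
        apply ENNReal.ofReal_le_ofReal
        have hexp1 : Real.exp (-(c' * r ^ 2) / t) ≤ 1 := by
          rw [Real.exp_le_one_iff, neg_div]
          have h2 : (0:ℝ) ≤ c' * r ^ 2 := by positivity
          simpa using div_nonneg h2 ht.1.le
        have hcast : -(((1:ℕ)):ℝ)/2 = -(1:ℝ)/2 := by norm_num
        rw [hcast]
        calc ct * t ^ (-(1:ℝ)/2) * Real.exp (-(c' * r ^ 2) / t)
            ≤ ct * t ^ (-(1:ℝ)/2) * 1 := by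
              apply mul_le_mul_of_nonneg_left hexp1
              have := ht.1
              positivity
          _ = ct * t ^ (-(1:ℝ)/2) := mul_one _
      calc (∫⁻ t in Set.Ioc (0:ℝ) 1,
            ENNReal.ofReal (ct * t ^ (-((1:ℕ):ℝ)/2) * Real.exp (-(c' * r ^ 2) / t)))
          ≤ ∫⁻ t in Set.Ioc (0:ℝ) 1, ENNReal.ofReal (ct * t ^ (-(1:ℝ)/2)) :=
            setLIntegral_mono' measurableSet_Ioc hb
        _ = ENNReal.ofReal ct * ∫⁻ t in Set.Ioc (0:ℝ) 1, ENNReal.ofReal (t ^ (-(1:ℝ)/2)) := by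
            rw [← lintegral_const_mul' _ _ ENNReal.ofReal_ne_top]
            exact lintegral_congr fun t => ENNReal.ofReal_mul hct.le
        _ = ENNReal.ofReal ct * ENNReal.ofReal 2 := by rw [my_lint_rpow_half]
        _ = ENNReal.ofReal (ct * 2) := by rw [← ENNReal.ofReal_mul hct.le]
    calc greenFn p x = _ := hsplit
      _ ≤ ENNReal.ofReal (ct * 2) + ENNReal.ofReal Ltail := add_le_add hSb hTail'
      _ = ENNReal.ofReal (ct * 2 + Ltail) := by
          rw [← ENNReal.ofReal_add (by positivity) hLtail0]
      _ ≤ ENNReal.ofReal c := by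
          apply ENNReal.ofReal_le_ofReal
          have habs : 0 ≤ |Real.log D| := abs_nonneg _
          rw [hcdef]
          nlinarith

end
end
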